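/- arXiv:2009.06411 — 8 statements merged into one kernel-verified Lean document; each statement's English description precedes it below -/
import Mathlib

section
/- Let g : ℕ* → ℂ be an arithmetic function and define f(n) = Σ_{d | n} g(d). Then for every positive integer n, f(n) = Σ_{k=1}^{n} μ(k / gcd(n,k)) · (φ(k) / φ(k / gcd(n,k))) · Σ_{l=1}^{⌊n/k⌋} g(k·l)/(k·l), where μ is the Möbius function, φ is Euler's totient function, and gcd(n,k) denotes the greatest common divisor of n and k. -/
open Finset ArithmeticFunction
open scoped ArithmeticFunction.Moebius ArithmeticFunction.zeta

section Aux

variable (n : ℕ)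

private lemma gcd_mul_of_coprime {a b : ℕ} (hab : Nat.Coprime a b) :
    Nat.gcd n (a * b) = Nat.gcd n a * Nat.gcd n b := by
  apply Nat.dvd_antisymm
  · have h1 : Nat.gcd n (a * b) ∣ Nat.gcd (Nat.gcd n (a*b)) a * Nat.gcd (Nat.gcd n (a*b)) b :=
      Nat.dvd_gcd_mul_gcd_iff_dvd_mul.mpr (Nat.gcd_dvd_right _ _)
    refine h1.trans (mul_dvd_mul ?_ ?_)
    · exact Nat.dvd_gcd ((Nat.gcd_dvd_left _ _).trans (Nat.gcd_dvd_left _ _))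
        (Nat.gcd_dvd_right _ _)
    · exact Nat.dvd_gcd ((Nat.gcd_dvd_left _ _).trans (Nat.gcd_dvd_left _ _))
        (Nat.gcd_dvd_right _ _)
  · refine Nat.dvd_gcd ?_ (mul_dvd_mul (Nat.gcd_dvd_right _ _) (Nat.gcd_dvd_right _ _))
    refine Nat.Coprime.mul_dvd_of_dvd_of_dvd ?_ (Nat.gcd_dvd_left _ _) (Nat.gcd_dvd_left _ _)
    exact Nat.Coprime.coprime_dvd_left (Nat.gcd_dvd_right _ _)
      (Nat.Coprime.coprime_dvd_right (Nat.gcd_dvd_right _ _) hab)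

/-- The function `d ↦ if d ∣ n then d else 0`. -/
private noncomputable def hFun : ArithmeticFunction ℂ where
  toFun d := if d ∣ n then (d : ℂ) else 0
  map_zero' := by by_cases h : (0:ℕ) ∣ n <;> simp [h]

private lemma hFun_apply (d : ℕ) : hFun n d = if d ∣ n then (d : ℂ) else 0 := rfl

private lemma hFun_isMult (hn : 0 < n) : (hFun n).IsMultiplicative := by
  constructor
  · simp [hFun_apply]
  · intro a b hab
    simp only [hFun_apply]
    by_cases ha : a ∣ n
    · by_cases hb : b ∣ n
      · rw [if_pos (hab.mul_dvd_of_dvd_of_dvd ha hb), if_pos ha, if_pos hb]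
        push_cast; ring
      · rw [if_neg (fun h => hb ((dvd_mul_left b a).trans h)), if_pos ha, if_neg hb, mul_zero]
    · rw [if_neg (fun h => ha ((dvd_mul_right a b).trans h)), if_neg ha, zero_mul]

/-- von Sterneck function. -/
private noncomputable def GFun : ArithmeticFunction ℂ where
  toFun k := (μ (k / Nat.gcd n k) : ℂ) *
      ((Nat.totient k : ℂ) / (Nat.totient (k / Nat.gcd n k) : ℂ))
  map_zero' := by simp

private lemma GFun_apply (k : ℕ) :
    GFun n k = (μ (k / Nat.gcd n k) : ℂ) *
      ((Nat.totient k : ℂ) / (Nat.totient (k / Nat.gcd n k) : ℂ)) := rfl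

private lemma GFun_isMult : (GFun n).IsMultiplicative := by
  rw [ArithmeticFunction.IsMultiplicative.iff_ne_zero]
  constructor
  · simp [GFun_apply]
  · intro a b ha hb hab
    have hga : Nat.gcd n a ∣ a := Nat.gcd_dvd_right n a
    have hgb : Nat.gcd n b ∣ b := Nat.gcd_dvd_right n b
    have hsplit : a * b / Nat.gcd n (a * b) = (a / Nat.gcd n a) * (b / Nat.gcd n b) := by
      rw [gcd_mul_of_coprime n hab, Nat.div_mul_div_comm hga hgb]
    have hcop : (a / Nat.gcd n a).Coprime (b / Nat.gcd n b) :=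
      Nat.Coprime.coprime_dvd_left (Nat.div_dvd_of_dvd hga)
        (Nat.Coprime.coprime_dvd_right (Nat.div_dvd_of_dvd hgb) hab)
    simp only [GFun_apply, hsplit]
    rw [isMultiplicative_moebius.map_mul_of_coprime hcop,
      Nat.totient_mul hab, Nat.totient_mul hcop]
    push_cast
    ring

/-- `F = h * μ`, which equals the Ramanujan sum `c_k(n)` as a function of `k`. -/
private noncomputable def FFun : ArithmeticFunction ℂ := hFun n * (μ : ArithmeticFunction ℂ)

private lemma FFun_isMult (hn : 0 < n) : (FFun n).IsMultiplicative :=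
  (hFun_isMult n hn).mul isMultiplicative_moebius.intCast

/-- von Sterneck formula: `G = F` on prime powers, hence everywhere. -/
private lemma GFun_eq_FFun (hn : 0 < n) : GFun n = FFun n := by
  rw [ArithmeticFunction.IsMultiplicative.eq_iff_eq_on_prime_powers _ (GFun_isMult n) _ (FFun_isMult n hn)]
  intro p i hp
  have hp1 : 1 < p := hp.one_lt
  have hp0 : 0 < p := hp.pos
  -- the gcd is a power of p
  obtain ⟨b, hbi, hb⟩ := (Nat.dvd_prime_pow hp).mp (Nat.gcd_dvd_right n (p ^ i))
  have hpbn : p ^ b ∣ n := hb ▸ Nat.gcd_dvd_left n (p ^ i)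
  have hdvd_iff : ∀ j, j ≤ i → (p ^ j ∣ n ↔ j ≤ b) := by
    intro j hj
    constructor
    · intro hjn
      have : p ^ j ∣ p ^ b := hb ▸ Nat.dvd_gcd hjn (pow_dvd_pow p hj)
      exact (Nat.pow_dvd_pow_iff_le_right hp1).mp this
    · intro hjb
      exact (pow_dvd_pow p hjb).trans hpbn
  have hq : p ^ i / Nat.gcd n (p ^ i) = p ^ (i - b) := by
    rw [hb, Nat.pow_div hbi hp0]
  -- compute F (p ^ i)
  have hF : FFun n (p ^ i) =
      ∑ j ∈ range (i + 1), (if p ^ j ∣ n then (p : ℂ) ^ j else 0) * (μ (p ^ (i - j)) : ℂ) := by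
    rw [FFun, ArithmeticFunction.mul_apply, Nat.sum_divisorsAntidiagonal (f := fun x y => hFun n x * ((μ : ArithmeticFunction ℂ) y)), Nat.sum_divisors_prime_pow hp]
    refine Finset.sum_congr rfl fun j hj => ?_
    rw [hFun_apply, ArithmeticFunction.intCoe_apply, Nat.pow_div (Nat.lt_succ_iff.mp (mem_range.mp hj)) hp0]
    push_cast
    rfl
  rcases Nat.eq_zero_or_pos i with rfl | hi
  · -- i = 0
    rw [pow_zero, (GFun_isMult n).1, (FFun_isMult n hn).1]
  · -- i ≥ 1
    obtain ⟨i', rfl⟩ : ∃ i', i = i' + 1 := ⟨i - 1, by omega⟩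
    have e1 : i' + 1 - i' = 1 := by omega
    have e2 : i' + 1 - (i' + 1) = 0 := by omega
    have hsum : FFun n (p ^ (i' + 1)) =
        (if p ^ i' ∣ n then (p : ℂ) ^ i' else 0) * (μ (p ^ 1) : ℂ)
        + (if p ^ (i' + 1) ∣ n then (p : ℂ) ^ (i' + 1) else 0) * (μ (p ^ 0) : ℂ) := by
      rw [hF, Finset.sum_range_succ, Finset.sum_range_succ, e1, e2]
      have hz : ∀ j ∈ range i',
          (if p ^ j ∣ n then (p : ℂ) ^ j else 0) * (μ (p ^ (i' + 1 - j)) : ℂ) = 0 := by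
        intro j hj
        have hj' : j < i' := mem_range.mp hj
        rw [ArithmeticFunction.moebius_apply_prime_pow hp (by omega),
          if_neg (show ¬ i' + 1 - j = 1 by omega)]
        simp
      rw [Finset.sum_eq_zero hz, zero_add]
    have hmu_p : (μ (p ^ 1) : ℂ) = -1 := by
      rw [pow_one, ArithmeticFunction.moebius_apply_prime hp]; push_cast; ring
    have hmu_0 : (μ (p ^ 0) : ℂ) = 1 := by
      rw [pow_zero, ArithmeticFunction.moebius_apply_one]; push_cast; ring
    have htot : ∀ m : ℕ, ((Nat.totient (p ^ (m + 1)) : ℕ) : ℂ) = (p : ℂ) ^ m * ((p : ℂ) - 1) := by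
      intro m
      rw [Nat.totient_prime_pow_succ hp]
      push_cast [Nat.cast_sub hp.one_lt.le]
      ring
    have hpne : (p : ℂ) - 1 ≠ 0 := by
      intro h
      have h' : (p : ℂ) = 1 := by linear_combination h
      have : p = 1 := by exact_mod_cast h'
      omega
    rcases Nat.lt_or_ge b i' with hblt | hbge
    · -- b < i', both sides zero
      have h1 : ¬ p ^ i' ∣ n := by rw [hdvd_iff i' (by omega)]; omega
      have h2 : ¬ p ^ (i' + 1) ∣ n := by rw [hdvd_iff (i' + 1) le_rfl]; omega
      rw [GFun_apply, hq, ArithmeticFunction.moebius_apply_prime_pow hp (by omega),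
        if_neg (show ¬ i' + 1 - b = 1 by omega), hsum, if_neg h1, if_neg h2]
      simp
    · rcases Nat.lt_or_ge b (i' + 1) with hblt2 | hbge2
      · -- b = i'
        have hbi' : b = i' := by omega
        have h1 : p ^ i' ∣ n := by rw [hdvd_iff i' (by omega)]; omega
        have h2 : ¬ p ^ (i' + 1) ∣ n := by rw [hdvd_iff (i' + 1) le_rfl]; omega
        rw [GFun_apply, hq, hbi', e1, hsum, if_pos h1, if_neg h2, hmu_p, htot, pow_one,
          Nat.totient_prime hp, Nat.cast_sub hp.one_lt.le]
        push_cast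
        field_simp
        ring
      · -- b = i' + 1
        have hbi2 : b = i' + 1 := by omega
        have h1 : p ^ i' ∣ n := by rw [hdvd_iff i' (by omega)]; omega
        have h2 : p ^ (i' + 1) ∣ n := by rw [hdvd_iff (i' + 1) le_rfl]; omega
        rw [GFun_apply, hq, hbi2, e2, pow_zero, ArithmeticFunction.moebius_apply_one,
          hsum, if_pos h1, if_pos h2, hmu_p, hmu_0, htot]
        simp only [Nat.totient_one, Nat.cast_one, Int.cast_one]
        push_cast
        ring

/-- Summing `F` over divisors recovers `h`. -/
private lemma sum_FFun (hn : 0 < n) (m : ℕ) :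
    ∑ k ∈ m.divisors, FFun n k = if m ∣ n then (m : ℂ) else 0 := by
  have : ∑ k ∈ m.divisors, FFun n k = ((FFun n) * (ζ : ArithmeticFunction ℂ)) m := by
    rw [ArithmeticFunction.coe_mul_zeta_apply]
  rw [this, FFun, mul_assoc, ArithmeticFunction.coe_moebius_mul_coe_zeta, mul_one, hFun_apply]

/-- Reindexing a double sum: pairs `(k, l)` with `k * l ≤ n` correspond to pairs
`(m, k)` with `m ≤ n` and `k ∣ m`. -/
private lemma swap_sum (T : ℕ → ℕ → ℂ) :
    ∑ k ∈ Icc 1 n, ∑ l ∈ Icc 1 (n / k), T k (k * l)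
      = ∑ m ∈ Icc 1 n, ∑ k ∈ m.divisors, T k m := by
  rw [Finset.sum_sigma', Finset.sum_sigma']
  refine Finset.sum_nbij' (fun x => ⟨x.1 * x.2, x.1⟩) (fun x => ⟨x.2, x.1 / x.2⟩)
    ?_ ?_ ?_ ?_ ?_
  · rintro ⟨k, l⟩ hkl
    simp only [Finset.mem_sigma, Finset.mem_Icc, Nat.mem_divisors] at hkl ⊢
    obtain ⟨⟨hk1, hkn⟩, hl1, hln⟩ := hkl
    have hk0 : 0 < k := hk1
    refine ⟨⟨Nat.one_le_iff_ne_zero.mpr (by positivity), ?_⟩, dvd_mul_right k l, by positivity⟩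
    calc k * l ≤ k * (n / k) := Nat.mul_le_mul_left k hln
      _ ≤ n := Nat.mul_div_le n k
  · rintro ⟨m, k⟩ hmk
    simp only [Finset.mem_sigma, Finset.mem_Icc, Nat.mem_divisors] at hmk ⊢
    obtain ⟨⟨hm1, hmn⟩, hkm, hm0⟩ := hmk
    have hm0' : 0 < m := hm1
    have hk0 : 0 < k := Nat.pos_of_dvd_of_pos hkm hm0'
    refine ⟨⟨hk0, le_trans (Nat.le_of_dvd hm0' hkm) hmn⟩,
      Nat.one_le_div_iff hk0 |>.mpr (Nat.le_of_dvd hm0' hkm), Nat.div_le_div_right hmn⟩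
  · rintro ⟨k, l⟩ hkl
    simp only [Finset.mem_sigma, Finset.mem_Icc] at hkl
    have hk0 : 0 < k := hkl.1.1
    simp [Nat.mul_div_cancel_left l hk0]
  · rintro ⟨m, k⟩ hmk
    simp only [Finset.mem_sigma, Finset.mem_Icc, Nat.mem_divisors] at hmk
    simp [Nat.mul_div_cancel' hmk.2.1]
  · rintro ⟨k, l⟩ _
    rfl

end Aux

theorem divisor_sum_formula (g : ℕ → ℂ) (f : ℕ → ℂ)
    (hf : ∀ n : ℕ, 0 < n → f n = ∑ d ∈ n.divisors, g d)
    (n : ℕ) (hn : 0 < n) :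
    f n = ∑ k ∈ Icc 1 n,
      (μ (k / Nat.gcd n k) : ℂ) *
        ((Nat.totient k : ℂ) / (Nat.totient (k / Nat.gcd n k) : ℂ)) *
        ∑ l ∈ Icc 1 (n / k), g (k * l) / ((k : ℂ) * l) := by
  have step1 : ∀ k ∈ Icc 1 n,
      (μ (k / Nat.gcd n k) : ℂ) *
        ((Nat.totient k : ℂ) / (Nat.totient (k / Nat.gcd n k) : ℂ)) *
        ∑ l ∈ Icc 1 (n / k), g (k * l) / ((k : ℂ) * l)
      = ∑ l ∈ Icc 1 (n / k), GFun n k * (g (k * l) / ((k : ℂ) * l)) := by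
    intro k _
    rw [GFun_apply, Finset.mul_sum]
  rw [Finset.sum_congr rfl step1]
  have step2 : ∑ k ∈ Icc 1 n, ∑ l ∈ Icc 1 (n / k), GFun n k * (g (k * l) / ((k : ℂ) * l))
      = ∑ m ∈ Icc 1 n, ∑ k ∈ m.divisors, GFun n k * (g m / (m : ℂ)) := by
    have := swap_sum n (fun k m => GFun n k * (g m / (m : ℂ)))
    rw [← this]
    refine Finset.sum_congr rfl fun k hk => Finset.sum_congr rfl fun l hl => ?_
    push_cast
    ring_nf
  rw [step2]
  have step3 : ∀ m ∈ Icc 1 n,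
      ∑ k ∈ m.divisors, GFun n k * (g m / (m : ℂ))
        = (if m ∣ n then (m : ℂ) else 0) * (g m / (m : ℂ)) := by
    intro m _
    rw [← Finset.sum_mul, GFun_eq_FFun n hn, sum_FFun n hn m]
  rw [Finset.sum_congr rfl step3]
  have step4 : ∑ m ∈ Icc 1 n, (if m ∣ n then (m : ℂ) else 0) * (g m / (m : ℂ))
      = ∑ m ∈ n.divisors, g m := by
    have h1 : ∀ m ∈ Icc 1 n, (if m ∣ n then (m : ℂ) else 0) * (g m / (m : ℂ))
        = if m ∣ n then (m : ℂ) * (g m / (m : ℂ)) else 0 := by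
      intro m _
      split <;> simp
    rw [Finset.sum_congr rfl h1, ← Finset.sum_filter]
    have h2 : Finset.filter (· ∣ n) (Icc 1 n) = n.divisors := by
      ext m
      simp only [Finset.mem_filter, Finset.mem_Icc, Nat.mem_divisors]
      constructor
      · rintro ⟨⟨_, _⟩, hd⟩
        exact ⟨hd, hn.ne'⟩
      · rintro ⟨hd, _⟩
        exact ⟨⟨Nat.pos_of_dvd_of_pos hd hn, Nat.le_of_dvd hn hd⟩, hd⟩
    rw [h2]
    refine Finset.sum_congr rfl fun m hm => ?_
    have hm0 : (m : ℂ) ≠ 0 := by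
      have := Nat.pos_of_mem_divisors hm
      exact_mod_cast this.ne'
    field_simp
  rw [step4, hf n hn]
end

section
/- Let g : ℕ* → ℂ be an arithmetic function and define f(n) = Σ_{d | n} g(d). Then for every positive integer n, f(n) = Σ_{b=1}^{n} c_b(n) · Σ_{u=1}^{⌊n/b⌋} g(b·u)/(b·u), where c_b(n) is the Ramanujan sum. -/
open Finset Real Complex

/-- The Ramanujan sum `c_m(n) = ∑_{1 ≤ k ≤ m, gcd(k,m)=1} exp(2πikn/m)`. -/
noncomputable def ramanujanSum (m n : ℕ) : ℂ :=
  ∑ k ∈ (Icc 1 m).filter (fun k => Nat.gcd k m = 1),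
    Complex.exp (2 * Real.pi * Complex.I * k * n / m)

lemma sum_exp_eq (m n : ℕ) (hm : 0 < m) :
    ∑ k ∈ Icc 1 m, Complex.exp (2 * Real.pi * Complex.I * k * n / m)
      = if m ∣ n then (m : ℂ) else 0 := by
  have hm0 : (m : ℂ) ≠ 0 := Nat.cast_ne_zero.mpr hm.ne'
  set ζ : ℂ := Complex.exp (2 * Real.pi * Complex.I * n / m) with hζ
  have hterm : ∀ k : ℕ, Complex.exp (2 * Real.pi * Complex.I * k * n / m) = ζ ^ k := by
    intro k
    rw [hζ, ← Complex.exp_nat_mul]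
    congr 1
    field_simp
  simp only [hterm]
  by_cases hdvd : m ∣ n
  · obtain ⟨c, rfl⟩ := hdvd
    have hζ1 : ζ = 1 := by
      rw [hζ]
      have : 2 * Real.pi * Complex.I * (m * c : ℕ) / m = (c : ℤ) * (2 * Real.pi * Complex.I) := by
        push_cast; field_simp
      rw [this, Complex.exp_int_mul_two_pi_mul_I]
    simp [hζ1, Nat.card_Icc]
  · rw [if_neg hdvd]
    have h2pi : (2 : ℂ) * Real.pi * Complex.I ≠ 0 := by
      refine mul_ne_zero (mul_ne_zero two_ne_zero ?_) Complex.I_ne_zero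
      exact_mod_cast Real.pi_ne_zero
    have hζm : ζ ^ m = 1 := by
      rw [hζ, ← Complex.exp_nat_mul]
      have : (m : ℂ) * (2 * Real.pi * Complex.I * n / m) = (n : ℤ) * (2 * Real.pi * Complex.I) := by
        push_cast; field_simp
      rw [this, Complex.exp_int_mul_two_pi_mul_I]
    have hζ1 : ζ ≠ 1 := by
      intro h
      rw [hζ, Complex.exp_eq_one_iff] at h
      obtain ⟨t, ht⟩ := h
      have hnm : (n : ℂ) = t * m := by
        field_simp at ht
        apply mul_left_cancel₀ h2pi
        rw [ht]; ring
      apply hdvd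
      have : (n : ℤ) = t * m := by exact_mod_cast hnm
      exact Int.natCast_dvd_natCast.mp ⟨t, by rw [this, mul_comm]⟩
    have : ∑ x ∈ Icc 1 m, ζ ^ x = ζ * ∑ x ∈ range m, ζ ^ x := by
      rw [← Finset.Ico_add_one_right_eq_Icc, Finset.sum_Ico_eq_sum_range, Finset.mul_sum]
      simp [pow_succ, pow_add, mul_comm]
    rw [this, geom_sum_eq hζ1, hζm]
    simp

lemma sum_ramanujanSum (m n : ℕ) (hm : 0 < m) :
    ∑ b ∈ m.divisors, ramanujanSum b n
      = ∑ k ∈ Icc 1 m, Complex.exp (2 * Real.pi * Complex.I * k * n / m) := by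
  unfold ramanujanSum
  rw [Finset.sum_sigma' m.divisors]
  refine Finset.sum_nbij' (fun p => p.2 * (m / p.1))
    (fun k => ⟨m / Nat.gcd k m, k / Nat.gcd k m⟩) ?_ ?_ ?_ ?_ ?_
  · rintro ⟨b, j⟩ hp
    rw [Finset.mem_sigma, Finset.mem_filter, Finset.mem_Icc] at hp
    dsimp only at hp ⊢
    obtain ⟨hb, ⟨hj1, hjb⟩, -⟩ := hp
    have hbm := Nat.dvd_of_mem_divisors hb
    have hbpos := Nat.pos_of_mem_divisors hb
    have hcpos : 0 < m / b := Nat.div_pos (Nat.le_of_dvd hm hbm) hbpos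
    rw [Finset.mem_Icc]
    constructor
    · exact Nat.one_le_iff_ne_zero.mpr
        (Nat.mul_ne_zero (Nat.one_le_iff_ne_zero.mp hj1) hcpos.ne')
    · calc j * (m / b) ≤ b * (m / b) := Nat.mul_le_mul_right _ hjb
        _ = m := Nat.mul_div_cancel' hbm
  · intro k hk
    rw [Finset.mem_Icc] at hk
    obtain ⟨hk1, hkm⟩ := hk
    have hg : 0 < Nat.gcd k m := Nat.gcd_pos_of_pos_left m hk1
    rw [Finset.mem_sigma, Finset.mem_filter, Finset.mem_Icc]
    exact ⟨Nat.mem_divisors.mpr ⟨Nat.div_dvd_of_dvd (Nat.gcd_dvd_right k m), hm.ne'⟩,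
      ⟨Nat.div_pos (Nat.le_of_dvd hk1 (Nat.gcd_dvd_left k m)) hg,
        Nat.div_le_div_right hkm⟩, Nat.coprime_div_gcd_div_gcd hg⟩
  · rintro ⟨b, j⟩ hp
    rw [Finset.mem_sigma, Finset.mem_filter, Finset.mem_Icc] at hp
    dsimp only at hp ⊢
    obtain ⟨hb, ⟨hj1, hjb⟩, hcop⟩ := hp
    have hbpos := Nat.pos_of_mem_divisors hb
    obtain ⟨c, hc⟩ := Nat.dvd_of_mem_divisors hb
    subst hc
    have hcpos : 0 < c := Nat.pos_of_ne_zero (by rintro rfl; simp at hm)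
    have hdiv : b * c / b = c := Nat.mul_div_cancel_left c hbpos
    have hgcd : Nat.gcd (j * c) (b * c) = c := by
      rw [Nat.gcd_mul_right, hcop, one_mul]
    simp only [hgcd, hdiv, Nat.mul_div_cancel _ hcpos]
  · intro k hk
    rw [Finset.mem_Icc] at hk
    have hg : 0 < Nat.gcd k m := Nat.gcd_pos_of_pos_left m hk.1
    dsimp only
    rw [Nat.div_div_self (Nat.gcd_dvd_right k m) hm.ne',
      Nat.div_mul_cancel (Nat.gcd_dvd_left k m)]
  · rintro ⟨b, j⟩ hp
    rw [Finset.mem_sigma, Finset.mem_filter, Finset.mem_Icc] at hp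
    dsimp only at hp ⊢
    obtain ⟨hb, ⟨hj1, hjb⟩, hcop⟩ := hp
    have hbpos := Nat.pos_of_mem_divisors hb
    obtain ⟨c, hc⟩ := Nat.dvd_of_mem_divisors hb
    subst hc
    have hcpos : 0 < c := Nat.pos_of_ne_zero (by rintro rfl; simp at hm)
    have hdiv : b * c / b = c := Nat.mul_div_cancel_left c hbpos
    rw [hdiv]
    congr 1
    have hb0 : (b : ℂ) ≠ 0 := Nat.cast_ne_zero.mpr hbpos.ne'
    have hc0 : (c : ℂ) ≠ 0 := Nat.cast_ne_zero.mpr hcpos.ne'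
    push_cast
    field_simp


theorem divisor_sum_eq_ramanujan_sum (g : ℕ → ℂ) (f : ℕ → ℂ)
    (hf : ∀ n : ℕ, 0 < n → f n = ∑ d ∈ n.divisors, g d)
    (n : ℕ) (hn : 0 < n) :
    f n = ∑ b ∈ Icc 1 n,
      ramanujanSum b n * ∑ u ∈ Icc 1 (n / b), g (b * u) / ((b : ℂ) * u) := by
  rw [hf n hn]
  symm
  simp only [Finset.mul_sum]
  rw [Finset.sum_sigma' (Icc 1 n)]
  have reindex :
      ∑ p ∈ (Icc 1 n).sigma (fun b => Icc 1 (n / b)),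
          ramanujanSum p.1 n * (g (p.1 * p.2) / ((p.1 : ℂ) * p.2))
        = ∑ p ∈ (Icc 1 n).sigma (fun m => m.divisors),
          ramanujanSum p.2 n * (g p.1 / (p.1 : ℂ)) := by
    refine Finset.sum_nbij' (fun p => ⟨p.1 * p.2, p.1⟩) (fun p => ⟨p.2, p.1 / p.2⟩)
      ?_ ?_ ?_ ?_ ?_
    · rintro ⟨b, u⟩ hp
      rw [Finset.mem_sigma, Finset.mem_Icc, Finset.mem_Icc] at hp
      obtain ⟨⟨hb1, hbn⟩, hu1, hun⟩ := hp
      rw [Finset.mem_sigma, Finset.mem_Icc]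
      have hbu : b * u ≤ n := by
        have := (Nat.le_div_iff_mul_le hb1).mp hun
        nlinarith
      exact ⟨⟨Nat.one_le_iff_ne_zero.mpr
          (Nat.mul_ne_zero (Nat.one_le_iff_ne_zero.mp hb1) (Nat.one_le_iff_ne_zero.mp hu1)),
          hbu⟩,
        Nat.mem_divisors.mpr ⟨dvd_mul_right b u, by positivity⟩⟩
    · rintro ⟨m, b⟩ hp
      rw [Finset.mem_sigma, Finset.mem_Icc] at hp
      obtain ⟨⟨hm1, hmn⟩, hb⟩ := hp
      have hbm := Nat.dvd_of_mem_divisors hb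
      have hbpos := Nat.pos_of_mem_divisors hb
      rw [Finset.mem_sigma, Finset.mem_Icc, Finset.mem_Icc]
      exact ⟨⟨hbpos, le_trans (Nat.le_of_dvd hm1 hbm) hmn⟩,
        Nat.div_pos (Nat.le_of_dvd hm1 hbm) hbpos, Nat.div_le_div_right hmn⟩
    · rintro ⟨b, u⟩ hp
      rw [Finset.mem_sigma, Finset.mem_Icc, Finset.mem_Icc] at hp
      dsimp only
      simp only [Nat.mul_div_cancel_left _ hp.1.1]
    · rintro ⟨m, b⟩ hp
      rw [Finset.mem_sigma, Finset.mem_Icc] at hp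
      dsimp only
      simp only [Nat.mul_div_cancel' (Nat.dvd_of_mem_divisors hp.2)]
    · rintro ⟨b, u⟩ hp
      dsimp only
      push_cast
      ring
  rw [reindex, ← Finset.sum_sigma' (Icc 1 n) (fun m => m.divisors)
    (fun m b => ramanujanSum b n * (g m / (m : ℂ)))]
  have step : ∀ m ∈ Icc 1 n,
      ∑ b ∈ m.divisors, ramanujanSum b n * (g m / (m : ℂ))
        = if m ∣ n then g m else 0 := by
    intro m hm
    rw [Finset.mem_Icc] at hm
    have hmpos : 0 < m := hm.1
    have hm0 : (m : ℂ) ≠ 0 := Nat.cast_ne_zero.mpr hmpos.ne'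
    rw [← Finset.sum_mul, sum_ramanujanSum m n hmpos, sum_exp_eq m n hmpos]
    split
    · field_simp
    · simp
  rw [Finset.sum_congr rfl step, ← Finset.sum_filter]
  rw [Nat.divisors, Finset.Ico_add_one_right_eq_Icc]
end

section
/- (Hölder's formula) For every positive integer m and every positive integer n, the Ramanujan sum satisfies c_m(n) = μ(m / gcd(m,n)) · φ(m) / φ(m / gcd(m,n)), where μ is the Möbius function and φ is Euler's totient function. -/
open Finset Real Complex ArithmeticFunction
open scoped ArithmeticFunction.Moebius

lemma sum_exp_range (m n : ℕ) (hm : 0 < m) :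
    ∑ k ∈ range m, Complex.exp (2 * Real.pi * Complex.I * k * n / m) =
      if m ∣ n then (m : ℂ) else 0 := by
  have hm' : (m : ℂ) ≠ 0 := Nat.cast_ne_zero.mpr hm.ne'
  have hpi : (Real.pi : ℂ) ≠ 0 := by simpa using Real.pi_ne_zero
  have h2 : (2 : ℂ) * Real.pi * Complex.I ≠ 0 := by
    simp [hpi, Complex.I_ne_zero]
  have hterm : ∀ k : ℕ, Complex.exp (2 * Real.pi * Complex.I * k * n / m)
      = Complex.exp (2 * Real.pi * Complex.I * n / m) ^ k := by
    intro k
    rw [← Complex.exp_nat_mul]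
    ring_nf
  simp only [hterm]
  by_cases h : m ∣ n
  · obtain ⟨c, rfl⟩ := h
    simp only [if_pos (Dvd.intro c rfl)]
    have h1 : Complex.exp (2 * Real.pi * Complex.I * (↑(m * c)) / m) = 1 := by
      have he : (2 * Real.pi * Complex.I * (↑(m * c)) / ↑m) = (c : ℂ) * (2 * Real.pi * Complex.I) := by
        push_cast
        field_simp
      rw [he]
      exact_mod_cast Complex.exp_int_mul_two_pi_mul_I c
    rw [h1]
    simp
  · rw [if_neg h]
    have hx1 : Complex.exp (2 * Real.pi * Complex.I * n / m) ≠ 1 := by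
      intro hc
      rw [Complex.exp_eq_one_iff] at hc
      obtain ⟨z, hz⟩ := hc
      apply h
      have hz' : (n : ℂ) = z * m := by
        field_simp at hz
        linear_combination hz
      have hzn : (n : ℤ) = z * m := by exact_mod_cast hz'
      exact Int.natCast_dvd_natCast.mp ⟨z, by rw [hzn, mul_comm]⟩
    have hxm : Complex.exp (2 * Real.pi * Complex.I * n / m) ^ m = 1 := by
      rw [← Complex.exp_nat_mul]
      have he : (m : ℂ) * (2 * Real.pi * Complex.I * n / m) = (n : ℂ) * (2 * Real.pi * Complex.I) := by
        field_simp
      rw [he]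
      exact_mod_cast Complex.exp_int_mul_two_pi_mul_I n
    rw [geom_sum_eq hx1, hxm]
    simp

lemma moebius_divisor_sum (m n : ℕ) (hm : 0 < m) :
    ∑ k ∈ (range m).filter (fun k => Nat.gcd k m = 1),
      Complex.exp (2 * Real.pi * Complex.I * k * n / m)
    = ∑ e ∈ m.divisors, (μ (m / e) : ℂ) * (if e ∣ n then (e : ℂ) else 0) := by
  have hm0 : m ≠ 0 := hm.ne'
  rw [Finset.sum_filter]
  have hind : ∀ k, (if Nat.gcd k m = 1 then Complex.exp (2 * Real.pi * Complex.I * k * n / m) else 0)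
      = ∑ d ∈ m.divisors, (if d ∣ k then (μ d : ℂ) * Complex.exp (2 * Real.pi * Complex.I * k * n / m) else 0) := by
    intro k
    rw [← Finset.sum_filter]
    have hfil : m.divisors.filter (· ∣ k) = (Nat.gcd k m).divisors := by
      ext d
      simp only [Finset.mem_filter, Nat.mem_divisors]
      constructor
      · rintro ⟨⟨hdm, -⟩, hdk⟩
        exact ⟨Nat.dvd_gcd hdk hdm, fun hc => hm0 (Nat.eq_zero_of_gcd_eq_zero_right hc)⟩
      · rintro ⟨hd, -⟩
        exact ⟨⟨hd.trans (Nat.gcd_dvd_right k m), hm0⟩, hd.trans (Nat.gcd_dvd_left k m)⟩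
    rw [hfil, ← Finset.sum_mul]
    have hmu : ∑ d ∈ (Nat.gcd k m).divisors, (μ d : ℂ)
        = if Nat.gcd k m = 1 then 1 else 0 := by
      have h1 : ∑ d ∈ (Nat.gcd k m).divisors, (μ d : ℤ) = if Nat.gcd k m = 1 then 1 else 0 := by
        rw [← ArithmeticFunction.coe_mul_zeta_apply, ArithmeticFunction.moebius_mul_coe_zeta]
        simp [ArithmeticFunction.one_apply]
      calc ∑ d ∈ (Nat.gcd k m).divisors, (μ d : ℂ)
          = ((∑ d ∈ (Nat.gcd k m).divisors, (μ d : ℤ) : ℤ) : ℂ) := by push_cast; rfl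
        _ = _ := by rw [h1]; split <;> simp
    rw [hmu]
    split <;> simp
  simp only [hind]
  rw [Finset.sum_comm]
  have hstep : ∀ d ∈ m.divisors,
      ∑ k ∈ range m, (if d ∣ k then (μ d : ℂ) * Complex.exp (2 * Real.pi * Complex.I * k * n / m) else 0)
      = (μ d : ℂ) * (if (m / d) ∣ n then ((m / d : ℕ) : ℂ) else 0) := by
    intro d hd
    rw [Nat.mem_divisors] at hd
    obtain ⟨hdm, -⟩ := hd
    have hd0 : 0 < d := Nat.pos_of_dvd_of_pos hdm hm
    have hq0 : 0 < m / d := Nat.div_pos (Nat.le_of_dvd hm hdm) hd0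
    rw [← Finset.sum_filter, ← Finset.mul_sum]
    congr 1
    rw [← sum_exp_range (m / d) n hq0]
    refine Finset.sum_nbij' (fun k => k / d) (fun j => d * j) ?_ ?_ ?_ ?_ ?_
    · intro k hk
      simp only [Finset.mem_filter, Finset.mem_range] at hk
      rw [Finset.mem_range, Nat.lt_div_iff_mul_lt' hdm]
      obtain ⟨hkm, c, rfl⟩ := hk
      simpa [Nat.mul_div_cancel_left _ hd0] using hkm
    · intro j hj
      rw [Finset.mem_range] at hj
      rw [Finset.mem_filter, Finset.mem_range]
      exact ⟨(Nat.lt_div_iff_mul_lt' hdm j).mp hj, Dvd.intro j rfl⟩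
    · intro k hk
      simp only [Finset.mem_filter] at hk
      exact Nat.mul_div_cancel' hk.2
    · intro j hj
      simp [Nat.mul_div_cancel_left _ hd0]
    · intro k hk
      simp only [Finset.mem_filter, Finset.mem_range] at hk
      obtain ⟨hkm, c, rfl⟩ := hk
      simp only [Nat.mul_div_cancel_left _ hd0]
      congr 1
      have hmd : (m : ℂ) = (d : ℂ) * ((m / d : ℕ) : ℂ) := by
        rw [← Nat.cast_mul, Nat.mul_div_cancel' hdm]
      have hd0' : (d : ℂ) ≠ 0 := Nat.cast_ne_zero.mpr hd0.ne'
      have hq0' : ((m / d : ℕ) : ℂ) ≠ 0 := Nat.cast_ne_zero.mpr hq0.ne'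
      rw [hmd]
      push_cast
      field_simp
  rw [Finset.sum_congr rfl hstep]
  rw [← Nat.sum_div_divisors m (fun e => (μ (m / e) : ℂ) * (if e ∣ n then (e : ℂ) else 0))]
  refine Finset.sum_congr rfl fun d hd => ?_
  rw [Nat.mem_divisors] at hd
  rw [Nat.div_div_self hd.1 hm0]

/-- The arithmetic function `d ↦ d·[d ∣ n]` with values in `ℂ`. -/
noncomputable def holderD (n : ℕ) : ArithmeticFunction ℂ :=
  ⟨fun d => if d ∣ n then (d : ℂ) else 0, by simp⟩

lemma holderD_apply (n d : ℕ) : holderD n d = if d ∣ n then (d : ℂ) else 0 := rfl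

lemma holderD_isMultiplicative (n : ℕ) : (holderD n).IsMultiplicative := by
  refine ⟨by simp [holderD_apply], fun {a b} cop => ?_⟩
  by_cases ha : a ∣ n <;> by_cases hb : b ∣ n
  · simp [holderD_apply, ha, hb, cop.mul_dvd_of_dvd_of_dvd ha hb]
  · have : ¬ a * b ∣ n := fun hc => hb ((dvd_mul_left b a).trans hc)
    simp [holderD_apply, ha, hb, this]
  · have : ¬ a * b ∣ n := fun hc => ha ((dvd_mul_right a b).trans hc)
    simp [holderD_apply, ha, hb, this]
  · have : ¬ a * b ∣ n := fun hc => ha ((dvd_mul_right a b).trans hc)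
    simp [holderD_apply, ha, hb, this]

/-- The right-hand side of Hölder's formula, as an arithmetic function. -/
noncomputable def holderG (n : ℕ) : ArithmeticFunction ℂ :=
  ⟨fun m => (μ (m / Nat.gcd m n) : ℂ) * (Nat.totient m : ℂ) / (Nat.totient (m / Nat.gcd m n) : ℂ),
    by simp⟩

lemma holderG_apply (n m : ℕ) : holderG n m =
    (μ (m / Nat.gcd m n) : ℂ) * (Nat.totient m : ℂ) / (Nat.totient (m / Nat.gcd m n) : ℂ) := rfl

lemma holderG_isMultiplicative (n : ℕ) : (holderG n).IsMultiplicative := by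
  refine ⟨by simp [holderG_apply], fun {a b} cop => ?_⟩
  rcases Nat.eq_zero_or_pos a with rfl | ha
  · have hb1 : b = 1 := Nat.coprime_zero_left b |>.mp cop
    subst hb1
    simp [holderG_apply]
  rcases Nat.eq_zero_or_pos b with rfl | hb
  · have ha1 : a = 1 := Nat.coprime_zero_right a |>.mp cop
    subst ha1
    simp [holderG_apply]
  have hgcd : Nat.gcd (a * b) n = Nat.gcd a n * Nat.gcd b n := by
    rw [Nat.gcd_comm (a*b) n, Nat.Coprime.gcd_mul n cop, Nat.gcd_comm n a, Nat.gcd_comm n b]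
  have hga : Nat.gcd a n ∣ a := Nat.gcd_dvd_left a n
  have hgb : Nat.gcd b n ∣ b := Nat.gcd_dvd_left b n
  have hdiv : a * b / (Nat.gcd a n * Nat.gcd b n) = (a / Nat.gcd a n) * (b / Nat.gcd b n) :=
    (Nat.div_mul_div_comm hga hgb).symm
  have hqa : a / Nat.gcd a n ∣ a := Nat.div_dvd_of_dvd hga
  have hqb : b / Nat.gcd b n ∣ b := Nat.div_dvd_of_dvd hgb
  have hcopq : Nat.Coprime (a / Nat.gcd a n) (b / Nat.gcd b n) :=
    Nat.Coprime.coprime_dvd_left hqa (Nat.Coprime.coprime_dvd_right hqb cop)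
  have hmu : μ ((a / Nat.gcd a n) * (b / Nat.gcd b n))
      = μ (a / Nat.gcd a n) * μ (b / Nat.gcd b n) :=
    isMultiplicative_moebius.map_mul_of_coprime hcopq
  have htot : Nat.totient (a * b) = Nat.totient a * Nat.totient b := Nat.totient_mul cop
  have htotq : Nat.totient ((a / Nat.gcd a n) * (b / Nat.gcd b n))
      = Nat.totient (a / Nat.gcd a n) * Nat.totient (b / Nat.gcd b n) := Nat.totient_mul hcopq
  have hqa0 : 0 < a / Nat.gcd a n :=
    Nat.div_pos (Nat.le_of_dvd ha hga) (Nat.gcd_pos_of_pos_left n ha)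
  have hqb0 : 0 < b / Nat.gcd b n :=
    Nat.div_pos (Nat.le_of_dvd hb hgb) (Nat.gcd_pos_of_pos_left n hb)
  have hta : (Nat.totient (a / Nat.gcd a n) : ℂ) ≠ 0 :=
    Nat.cast_ne_zero.mpr (Nat.totient_pos.mpr hqa0).ne'
  have htb : (Nat.totient (b / Nat.gcd b n) : ℂ) ≠ 0 :=
    Nat.cast_ne_zero.mpr (Nat.totient_pos.mpr hqb0).ne'
  simp only [holderG_apply, hgcd, hdiv, hmu, htot, htotq]
  push_cast
  field_simp

lemma holderFG (n : ℕ) :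
    ((μ : ArithmeticFunction ℂ) * holderD n) = holderG n := by
  rw [ArithmeticFunction.IsMultiplicative.eq_iff_eq_on_prime_powers _
    ((isMultiplicative_moebius.intCast).mul (holderD_isMultiplicative n)) _
    (holderG_isMultiplicative n)]
  intro p i hp
  rcases Nat.eq_zero_or_pos i with rfl | hi
  · simp only [pow_zero]
    rw [ArithmeticFunction.IsMultiplicative.map_one
        ((isMultiplicative_moebius.intCast).mul (holderD_isMultiplicative n)),
      ArithmeticFunction.IsMultiplicative.map_one (holderG_isMultiplicative n)]
  obtain ⟨i', rfl⟩ : ∃ i', i = i' + 1 := ⟨i - 1, (Nat.succ_pred_eq_of_pos hi).symm⟩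
  obtain ⟨b, hbi, hgcd⟩ := (Nat.dvd_prime_pow hp).mp (Nat.gcd_dvd_left (p ^ (i' + 1)) n)
  have hdvd : ∀ j, j ≤ i' + 1 → (p ^ j ∣ n ↔ j ≤ b) := by
    intro j hj
    constructor
    · intro hjn
      have : p ^ j ∣ p ^ b := hgcd ▸ Nat.dvd_gcd (pow_dvd_pow p hj) hjn
      exact (Nat.pow_dvd_pow_iff_le_right hp.one_lt).mp this
    · intro hjb
      exact (pow_dvd_pow p hjb).trans (hgcd ▸ Nat.gcd_dvd_right (p ^ (i' + 1)) n)
  have hLHS : ((μ : ArithmeticFunction ℂ) * holderD n) (p ^ (i' + 1))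
      = (if i' + 1 ≤ b then ((p : ℂ) ^ (i' + 1)) else 0)
        - (if i' ≤ b then ((p : ℂ) ^ i') else 0) := by
    rw [ArithmeticFunction.mul_apply]
    rw [Nat.sum_divisorsAntidiagonal' (f := fun x y => ((μ : ArithmeticFunction ℂ) x) * holderD n y)]
    rw [Nat.sum_divisors_prime_pow hp]
    have hterm : ∀ j ∈ range (i' + 1 + 1),
        ((μ : ArithmeticFunction ℂ) (p ^ (i' + 1) / p ^ j)) * holderD n (p ^ j)
        = (μ (p ^ (i' + 1 - j)) : ℂ) * (if j ≤ b then ((p : ℂ) ^ j) else 0) := by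
      intro j hj
      rw [Finset.mem_range] at hj
      rw [Nat.pow_div (by omega) hp.pos, ArithmeticFunction.intCoe_apply, holderD_apply]
      rw [if_congr (hdvd j (by omega)) rfl rfl]
      push_cast
      rfl
    rw [Finset.sum_congr rfl hterm]
    rw [Finset.sum_range_succ, Finset.sum_range_succ]
    have hrest : ∑ j ∈ range i',
        (μ (p ^ (i' + 1 - j)) : ℂ) * (if j ≤ b then ((p : ℂ) ^ j) else 0) = 0 := by
      refine Finset.sum_eq_zero fun j hj => ?_
      rw [Finset.mem_range] at hj
      rw [ArithmeticFunction.moebius_apply_prime_pow hp (by omega), if_neg (by omega)]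
      simp
    rw [hrest]
    have h1 : i' + 1 - i' = 1 := by omega
    have h2 : i' + 1 - (i' + 1) = 0 := by omega
    rw [h1, h2, pow_one, pow_zero]
    rw [ArithmeticFunction.moebius_apply_prime hp, ArithmeticFunction.moebius_apply_one]
    push_cast
    split_ifs <;> ring
  rw [hLHS, holderG_apply, hgcd, Nat.pow_div hbi hp.pos]
  have hp1 : (1 : ℕ) ≤ p := hp.one_le
  have hpc : ((p - 1 : ℕ) : ℂ) = (p : ℂ) - 1 := by
    push_cast [Nat.cast_sub hp1]; ring
  have hpne : ((p : ℂ) - 1) ≠ 0 := by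
    rw [sub_ne_zero]
    exact_mod_cast hp.one_lt.ne'
  have htoti : (Nat.totient (p ^ (i' + 1)) : ℂ) = (p : ℂ) ^ i' * ((p : ℂ) - 1) := by
    rw [Nat.totient_prime_pow hp hi]
    push_cast [Nat.cast_sub hp1]
    ring_nf
  rcases Nat.lt_or_ge b i' with hblt | hbge
  · rw [if_neg (by omega), if_neg (by omega)]
    rw [ArithmeticFunction.moebius_apply_prime_pow hp (by omega), if_neg (by omega)]
    simp
  · rcases Nat.eq_or_lt_of_le hbge with hbeq | hblt2
    · rw [if_neg (by omega), if_pos (by omega)]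
      have h3 : i' + 1 - b = 1 := by omega
      rw [h3, pow_one, ArithmeticFunction.moebius_apply_prime hp]
      rw [Nat.totient_prime hp, htoti, hpc]
      push_cast
      field_simp
      ring
    · rw [if_pos (by omega), if_pos (by omega)]
      have h3 : i' + 1 - b = 0 := by omega
      rw [h3, pow_zero]
      simp only [ArithmeticFunction.moebius_apply_one, Nat.totient_one, Nat.cast_one, div_one,
        Int.cast_one, one_mul]
      rw [htoti]
      ring

/-- Hölder's formula for the Ramanujan sum. -/
theorem ramanujanSum_eq_holder (m n : ℕ) (hm : 0 < m) (hn : 0 < n) :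
    ramanujanSum m n =
      (μ (m / Nat.gcd m n) : ℂ) * (Nat.totient m : ℂ) /
        (Nat.totient (m / Nat.gcd m n) : ℂ) := by
  have key : ramanujanSum m n = ((μ : ArithmeticFunction ℂ) * holderD n) m := by
    have hconv : ((μ : ArithmeticFunction ℂ) * holderD n) m
        = ∑ e ∈ m.divisors, (μ (m / e) : ℂ) * (if e ∣ n then (e : ℂ) else 0) := by
      rw [ArithmeticFunction.mul_apply]
      rw [Nat.sum_divisorsAntidiagonal' (f := fun x y => ((μ : ArithmeticFunction ℂ) x) * holderD n y)]
      simp only [ArithmeticFunction.intCoe_apply, holderD_apply]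
    rw [hconv, ← moebius_divisor_sum m n hm]
    rcases Nat.lt_or_ge m 2 with hm2 | hm2
    · interval_cases m
      have hIcc : (Icc 1 1).filter (fun k => Nat.gcd k 1 = 1) = {1} := by decide
      have hrange : (range 1).filter (fun k => Nat.gcd k 1 = 1) = {0} := by decide
      rw [ramanujanSum, hIcc, hrange]
      simp only [Finset.sum_singleton]
      have h1 : (2 * Real.pi * Complex.I * (1 : ℕ) * n / (1 : ℕ)) = (n : ℂ) * (2 * Real.pi * Complex.I) := by
        push_cast
        ring
      have h0 : (2 * Real.pi * Complex.I * (0 : ℕ) * n / (1 : ℕ)) = (0 : ℂ) := by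
        push_cast
        ring
      rw [h1, h0, Complex.exp_zero]
      exact_mod_cast Complex.exp_int_mul_two_pi_mul_I n
    · have hset : (Icc 1 m).filter (fun k => Nat.gcd k m = 1)
          = (range m).filter (fun k => Nat.gcd k m = 1) := by
        ext k
        simp only [Finset.mem_filter, Finset.mem_Icc, Finset.mem_range]
        constructor
        · rintro ⟨⟨h1k, hkm⟩, hg⟩
          refine ⟨lt_of_le_of_ne hkm ?_, hg⟩
          rintro rfl
          rw [Nat.gcd_self] at hg
          omega
        · rintro ⟨hkm, hg⟩
          refine ⟨⟨?_, hkm.le⟩, hg⟩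
          rcases Nat.eq_zero_or_pos k with rfl | h
          · rw [Nat.gcd_zero_left] at hg
            omega
          · exact h
      rw [ramanujanSum, hset]
  rw [key, holderFG n, holderG_apply]
end

section
/- For every positive integer n, the number of divisors function satisfies d(n) = Σ_{k=1}^{n} (1/k) · H_{⌊n/k⌋} · μ(k / gcd(n,k)) · (φ(k) / φ(k / gcd(n,k))), where H_m = Σ_{i=1}^{m} 1/i is the m-th harmonic number. -/
open Finset ArithmeticFunction
open scoped ArithmeticFunction.Moebius
open scoped ArithmeticFunction.zeta

/-- indicator-times-identity arithmetic function: `d ↦ d` if `d ∣ n`, else 0. -/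
def iotaFun (n : ℕ) : ArithmeticFunction ℝ :=
  ⟨fun d => if d ∣ n ∧ d ≠ 0 then (d : ℝ) else 0, by simp⟩

lemma iotaFun_apply (n d : ℕ) : iotaFun n d = if d ∣ n ∧ d ≠ 0 then (d : ℝ) else 0 := rfl

lemma iotaFun_mult (n : ℕ) : (iotaFun n).IsMultiplicative := by
  constructor
  · simp [iotaFun_apply]
  · intro a b cop
    rcases eq_or_ne a 0 with rfl | ha
    · simp [iotaFun_apply]
    rcases eq_or_ne b 0 with rfl | hb
    · simp [iotaFun_apply]
    by_cases hA : a ∣ n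
    · by_cases hB : b ∣ n
      · simp [iotaFun_apply, hA, hB, ha, hb, (Nat.Coprime.mul_dvd_of_dvd_of_dvd cop hA hB),
          mul_ne_zero ha hb, Nat.cast_mul]
      · have : ¬ a * b ∣ n := fun h => hB (dvd_trans (dvd_mul_left b a) h)
        simp [iotaFun_apply, this, hB]
    · have : ¬ a * b ∣ n := fun h => hA (dvd_trans (dvd_mul_right a b) h)
      simp [iotaFun_apply, this, hA]

/-- Hölder's function as an arithmetic function in `k` for fixed `n`. -/
noncomputable def gFun (n : ℕ) : ArithmeticFunction ℝ :=
  ⟨fun k => if k = 0 then 0 else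
    (μ (k / Nat.gcd n k) : ℝ) *
      ((Nat.totient k : ℝ) / (Nat.totient (k / Nat.gcd n k) : ℝ)), by simp⟩

lemma gFun_apply (n k : ℕ) (hk : k ≠ 0) :
    gFun n k = (μ (k / Nat.gcd n k) : ℝ) *
      ((Nat.totient k : ℝ) / (Nat.totient (k / Nat.gcd n k) : ℝ)) := by
  simp [gFun, hk]

lemma gFun_mult (n : ℕ) : (gFun n).IsMultiplicative := by
  constructor
  · simp [gFun]
  · intro a b cop
    rcases eq_or_ne a 0 with rfl | ha
    · have hb1 : b = 1 := by simpa [Nat.coprime_zero_left] using cop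
      subst hb1; simp [gFun]
    rcases eq_or_ne b 0 with rfl | hb
    · have ha1 : a = 1 := by simpa [Nat.coprime_zero_right] using cop
      subst ha1; simp [gFun]
    have hab : a * b ≠ 0 := mul_ne_zero ha hb
    rw [gFun_apply n _ hab, gFun_apply n a ha, gFun_apply n b hb]
    have hgcd : Nat.gcd n (a * b) = Nat.gcd n a * Nat.gcd n b := Nat.Coprime.gcd_mul n cop
    have hqa : Nat.gcd n a ∣ a := Nat.gcd_dvd_right n a
    have hqb : Nat.gcd n b ∣ b := Nat.gcd_dvd_right n b
    have hquot : a * b / (Nat.gcd n a * Nat.gcd n b) = (a / Nat.gcd n a) * (b / Nat.gcd n b) :=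
      (Nat.div_mul_div_comm hqa hqb).symm
    have cop' : Nat.Coprime (a / Nat.gcd n a) (b / Nat.gcd n b) :=
      Nat.Coprime.coprime_dvd_left (Nat.div_dvd_of_dvd hqa)
        (Nat.Coprime.coprime_dvd_right (Nat.div_dvd_of_dvd hqb) cop)
    rw [hgcd, hquot]
    rw [isMultiplicative_moebius.map_mul_of_coprime cop', Nat.totient_mul cop,
      Nat.totient_mul cop']
    push_cast
    rw [mul_div_mul_comm]
    ring

lemma gcd_pow_eq (n p i : ℕ) (hp : p.Prime) (hn : n ≠ 0) :
    Nat.gcd n (p ^ i) = p ^ (min (n.factorization p) i) := by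
  set v := n.factorization p with hv
  obtain ⟨j, hji, hj⟩ := (Nat.dvd_prime_pow hp).1 (Nat.gcd_dvd_right n (p ^ i))
  have hjv : j ≤ v := by
    rw [hv]
    exact (Nat.Prime.pow_dvd_iff_le_factorization hp hn).1 (hj ▸ Nat.gcd_dvd_left n (p ^ i))
  have hmin : p ^ (min v i) ∣ Nat.gcd n (p ^ i) :=
    Nat.dvd_gcd ((Nat.Prime.pow_dvd_iff_le_factorization hp hn).2 (min_le_left v i))
      (pow_dvd_pow p (min_le_right v i))
  rw [hj] at hmin ⊢
  have hle : min v i ≤ j := (Nat.pow_dvd_pow_iff_le_right hp.one_lt).1 hmin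
  have : j = min v i := le_antisymm (le_min hjv hji) hle
  rw [this]

lemma holder_eq (n : ℕ) (hn : 0 < n) : iotaFun n * (μ : ArithmeticFunction ℝ) = gFun n := by
  rw [ArithmeticFunction.IsMultiplicative.eq_iff_eq_on_prime_powers _
    ((iotaFun_mult n).mul isMultiplicative_moebius.intCast) _ (gFun_mult n)]
  intro p i hp
  have hp0 : p ≠ 0 := hp.pos.ne'
  cases i with
  | zero =>
    rw [pow_zero, ((iotaFun_mult n).mul isMultiplicative_moebius.intCast).map_one,
      (gFun_mult n).map_one]
  | succ m =>
    have hpi : p ^ (m + 1) ≠ 0 := pow_ne_zero _ hp0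
    set v := n.factorization p with hv
    have hdvd : ∀ j : ℕ, iotaFun n (p ^ j) = if j ≤ v then (p:ℝ)^j else 0 := by
      intro j
      rw [iotaFun_apply]
      by_cases h : j ≤ v
      · rw [if_pos ⟨(Nat.Prime.pow_dvd_iff_le_factorization hp hn.ne').2 h,
          pow_ne_zero _ hp0⟩, if_pos h]
        push_cast; ring
      · rw [if_neg, if_neg h]
        rintro ⟨hd, -⟩
        exact h ((Nat.Prime.pow_dvd_iff_le_factorization hp hn.ne').1 hd)
    have hL : (iotaFun n * (μ : ArithmeticFunction ℝ)) (p ^ (m + 1)) =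
        (if m ≤ v then (p:ℝ) ^ m else 0) * (-1) +
          (if m + 1 ≤ v then (p:ℝ) ^ (m + 1) else 0) := by
      rw [ArithmeticFunction.mul_apply]
      simp only [ArithmeticFunction.intCoe_apply]
      rw [Nat.sum_divisorsAntidiagonal (f := fun x y => iotaFun n x * ((μ y : ℤ) : ℝ)),
        Nat.sum_divisors_prime_pow hp]
      rw [Finset.sum_range_succ, Finset.sum_range_succ]
      have hzero : ∀ j ∈ Finset.range m,
          iotaFun n (p ^ j) * ((μ (p ^ (m + 1) / p ^ j) : ℤ) : ℝ) = 0 := by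
        intro j hj
        have hjm : j < m := Finset.mem_range.1 hj
        rw [Nat.pow_div (by omega) hp.pos]
        rw [moebius_apply_prime_pow hp (by omega), if_neg (by omega)]
        simp
      rw [Finset.sum_eq_zero hzero]
      have h1 : p ^ (m + 1) / p ^ m = p := by
        rw [Nat.pow_div (by omega) hp.pos]
        simp
      have h2 : p ^ (m + 1) / p ^ (m + 1) = 1 := Nat.div_self (pow_pos hp.pos _)
      rw [h1, h2, hdvd, hdvd, moebius_apply_one, ArithmeticFunction.moebius_apply_prime hp]
      push_cast
      ring
    rw [hL, gFun_apply n _ hpi, gcd_pow_eq n p (m + 1) hp hn.ne', ← hv]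
    rw [Nat.pow_div (min_le_right _ _) hp.pos]
    rcases le_or_gt (m + 1) v with hiv | hvi
    · -- m + 1 ≤ v
      have hmv : m ≤ v := by omega
      rw [min_eq_right hiv, Nat.sub_self, pow_zero, moebius_apply_one, Nat.totient_one,
        if_pos hmv, if_pos hiv]
      rw [Nat.totient_prime_pow hp (Nat.succ_pos m), Nat.succ_sub_one]
      rw [Nat.cast_mul, Nat.cast_sub hp.one_le]
      push_cast
      ring
    · rcases eq_or_lt_of_le (Nat.succ_le_of_lt hvi) with hev | hgt
      · -- v + 1 = m + 1, i.e. v = m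
        have hvm : v = m := by omega
        have hsub : m + 1 - min v (m + 1) = 1 := by
          rw [min_eq_left (by omega)]; omega
        rw [min_eq_left (by omega), hsub] at *
        rw [pow_one, ArithmeticFunction.moebius_apply_prime hp,
          if_pos (le_of_eq hvm.symm), if_neg (by omega)]
        rw [Nat.totient_prime_pow hp (Nat.succ_pos m), Nat.succ_sub_one,
          Nat.totient_prime hp]
        have hne : ((p - 1 : ℕ) : ℝ) ≠ 0 := by
          have : 1 ≤ p - 1 := by have := hp.two_le; omega
          positivity
        rw [Nat.cast_mul]
        rw [mul_div_assoc, div_self hne]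
        push_cast
        ring
      · -- v + 2 ≤ m + 1
        have hsub : 2 ≤ m + 1 - min v (m + 1) := by
          rw [min_eq_left (by omega)]; omega
        rw [moebius_apply_prime_pow hp (by omega), if_neg (by omega),
          if_neg (by omega), if_neg (by omega)]
        simp

lemma sum_mu_harmonic (N : ℕ) (hN : 1 ≤ N) :
    ∑ m ∈ Icc 1 N, ((μ m : ℝ) / m) * (∑ j ∈ Icc 1 (N / m), (1:ℝ)/j) = 1 := by
  have h1 : ∑ m ∈ Icc 1 N, ((μ m : ℝ) / m) * (∑ j ∈ Icc 1 (N / m), (1:ℝ)/j)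
      = ∑ x ∈ (Icc 1 N).sigma (fun m => Icc 1 (N / m)), ((μ x.1 : ℝ) / (x.1 * x.2)) := by
    rw [Finset.sum_sigma]
    refine Finset.sum_congr rfl fun m hm => ?_
    rw [Finset.mul_sum]
    refine Finset.sum_congr rfl fun j hj => ?_
    rw [div_mul_div_comm, mul_one]
  have h2 : ∑ x ∈ (Icc 1 N).sigma (fun m => Icc 1 (N / m)), ((μ x.1 : ℝ) / (x.1 * x.2))
      = ∑ x ∈ (Icc 1 N).sigma (fun t => t.divisors), ((μ x.2 : ℝ) / x.1) := by
    refine Finset.sum_nbij' (fun x => ⟨x.1 * x.2, x.1⟩) (fun x => ⟨x.2, x.1 / x.2⟩)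
      ?_ ?_ ?_ ?_ ?_
    · rintro ⟨m, j⟩ hx
      simp only [Finset.mem_sigma, Finset.mem_Icc, Nat.mem_divisors] at hx ⊢
      obtain ⟨⟨hm1, hmN⟩, hj1, hjN⟩ := hx
      have hmj : j * m ≤ N := (Nat.le_div_iff_mul_le (by omega)).1 hjN
      refine ⟨⟨?_, ?_⟩, dvd_mul_right m j, ?_⟩
      · exact Nat.one_le_iff_ne_zero.2 (Nat.mul_ne_zero (by omega) (by omega))
      · rw [mul_comm]; exact hmj
      · exact Nat.mul_ne_zero (by omega) (by omega)
    · rintro ⟨t, m⟩ hx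
      simp only [Finset.mem_sigma, Finset.mem_Icc, Nat.mem_divisors] at hx ⊢
      obtain ⟨⟨ht1, htN⟩, hmt, ht0⟩ := hx
      have hm0 : 0 < m := Nat.pos_of_dvd_of_pos hmt (by omega)
      refine ⟨⟨hm0, le_trans (Nat.le_of_dvd (by omega) hmt) htN⟩, ?_, ?_⟩
      · exact (Nat.one_le_div_iff hm0).2 (Nat.le_of_dvd (by omega) hmt)
      · exact Nat.div_le_div_right htN
    · rintro ⟨m, j⟩ hx
      simp only [Finset.mem_sigma, Finset.mem_Icc] at hx
      have : m * j / m = j := Nat.mul_div_cancel_left j (by omega)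
      simp [this]
    · rintro ⟨t, m⟩ hx
      simp only [Finset.mem_sigma, Finset.mem_Icc, Nat.mem_divisors] at hx
      obtain ⟨⟨ht1, htN⟩, hmt, ht0⟩ := hx
      simp [Nat.mul_div_cancel' hmt]
    · rintro ⟨m, j⟩ hx
      push_cast
      rfl
  rw [h1, h2, Finset.sum_sigma]
  have h3 : ∀ t ∈ Icc 1 N, (∑ m ∈ t.divisors, ((μ m : ℝ) / t))
      = if t = 1 then 1 else 0 := by
    intro t ht
    rw [Finset.mem_Icc] at ht
    have ht0 : t ≠ 0 := by omega
    rw [← Finset.sum_div]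
    have hz : (∑ m ∈ t.divisors, (μ m : ℝ)) = ((∑ m ∈ t.divisors, μ m : ℤ) : ℝ) := by
      push_cast; rfl
    have hs : (∑ m ∈ t.divisors, μ m) = (μ * ζ : ArithmeticFunction ℤ) t := by
      rw [ArithmeticFunction.coe_mul_zeta_apply]
    rw [hz, hs, moebius_mul_coe_zeta, ArithmeticFunction.one_apply]
    by_cases h1 : t = 1 <;> simp [h1]
  rw [Finset.sum_congr rfl h3, Finset.sum_ite_eq' (Icc 1 N) 1 (fun _ => (1:ℝ))]
  simp [hN]

theorem card_divisors_formula (n : ℕ) (hn : 0 < n) :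
    (n.divisors.card : ℝ) =
      ∑ k ∈ Icc 1 n,
        (1 / (k : ℝ)) * (∑ i ∈ Icc 1 (n / k), (1 : ℝ) / i) *
          (μ (k / Nat.gcd n k) : ℝ) *
          ((Nat.totient k : ℝ) / (Nat.totient (k / Nat.gcd n k) : ℝ)) := by
  have stepA : ∑ k ∈ Icc 1 n,
        (1 / (k : ℝ)) * (∑ i ∈ Icc 1 (n / k), (1 : ℝ) / i) *
          (μ (k / Nat.gcd n k) : ℝ) *
          ((Nat.totient k : ℝ) / (Nat.totient (k / Nat.gcd n k) : ℝ))
      = ∑ x ∈ (Icc 1 n).sigma (fun k => k.divisors),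
          (1 / (x.1 : ℝ) * (∑ i ∈ Icc 1 (n / x.1), (1 : ℝ) / i)) *
            (iotaFun n x.2 * ((μ (x.1 / x.2) : ℤ) : ℝ)) := by
    rw [Finset.sum_sigma]
    refine Finset.sum_congr rfl fun k hk => ?_
    rw [Finset.mem_Icc] at hk
    have hk0 : k ≠ 0 := by omega
    have hg : (μ (k / Nat.gcd n k) : ℝ) *
        ((Nat.totient k : ℝ) / (Nat.totient (k / Nat.gcd n k) : ℝ))
        = (iotaFun n * (μ : ArithmeticFunction ℝ)) k := by
      rw [holder_eq n hn, gFun_apply n k hk0]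
    have hmul : (iotaFun n * (μ : ArithmeticFunction ℝ)) k
        = ∑ d ∈ k.divisors, iotaFun n d * ((μ (k / d) : ℤ) : ℝ) := by
      rw [ArithmeticFunction.mul_apply]
      simp only [ArithmeticFunction.intCoe_apply]
      rw [Nat.sum_divisorsAntidiagonal (f := fun x y => iotaFun n x * ((μ y : ℤ) : ℝ))]
    calc (1 / (k : ℝ)) * (∑ i ∈ Icc 1 (n / k), (1 : ℝ) / i) *
          (μ (k / Nat.gcd n k) : ℝ) *
          ((Nat.totient k : ℝ) / (Nat.totient (k / Nat.gcd n k) : ℝ))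
        = (1 / (k : ℝ) * (∑ i ∈ Icc 1 (n / k), (1 : ℝ) / i)) *
            ((μ (k / Nat.gcd n k) : ℝ) *
              ((Nat.totient k : ℝ) / (Nat.totient (k / Nat.gcd n k) : ℝ))) := by ring
      _ = (1 / (k : ℝ) * (∑ i ∈ Icc 1 (n / k), (1 : ℝ) / i)) *
            (∑ d ∈ k.divisors, iotaFun n d * ((μ (k / d) : ℤ) : ℝ)) := by rw [hg, hmul]
      _ = ∑ d ∈ k.divisors, (1 / (k : ℝ) * (∑ i ∈ Icc 1 (n / k), (1 : ℝ) / i)) *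
            (iotaFun n d * ((μ (k / d) : ℤ) : ℝ)) := Finset.mul_sum _ _ _
  have stepB : ∑ x ∈ (Icc 1 n).sigma (fun k => k.divisors),
          (1 / (x.1 : ℝ) * (∑ i ∈ Icc 1 (n / x.1), (1 : ℝ) / i)) *
            (iotaFun n x.2 * ((μ (x.1 / x.2) : ℤ) : ℝ))
      = ∑ x ∈ (Icc 1 n).sigma (fun d => Icc 1 (n / d)),
          (1 / ((x.1 * x.2 : ℕ) : ℝ) * (∑ i ∈ Icc 1 (n / (x.1 * x.2)), (1 : ℝ) / i)) *
            (iotaFun n x.1 * ((μ ((x.1 * x.2) / x.1) : ℤ) : ℝ)) := by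
    refine (Finset.sum_nbij' (fun x => ⟨x.1 * x.2, x.1⟩) (fun x => ⟨x.2, x.1 / x.2⟩)
      ?_ ?_ ?_ ?_ ?_).symm
    · rintro ⟨d, m⟩ hx
      simp only [Finset.mem_sigma, Finset.mem_Icc, Nat.mem_divisors] at hx ⊢
      obtain ⟨⟨hd1, hdN⟩, hm1, hmN⟩ := hx
      have hmd : m * d ≤ n := (Nat.le_div_iff_mul_le (by omega)).1 hmN
      refine ⟨⟨?_, ?_⟩, dvd_mul_right d m, ?_⟩
      · exact Nat.one_le_iff_ne_zero.2 (Nat.mul_ne_zero (by omega) (by omega))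
      · rw [mul_comm]; exact hmd
      · exact Nat.mul_ne_zero (by omega) (by omega)
    · rintro ⟨k, d⟩ hx
      simp only [Finset.mem_sigma, Finset.mem_Icc, Nat.mem_divisors] at hx ⊢
      obtain ⟨⟨hk1, hkN⟩, hdk, hk0⟩ := hx
      have hd0 : 0 < d := Nat.pos_of_dvd_of_pos hdk (by omega)
      refine ⟨⟨hd0, le_trans (Nat.le_of_dvd (by omega) hdk) hkN⟩, ?_, ?_⟩
      · exact (Nat.one_le_div_iff hd0).2 (Nat.le_of_dvd (by omega) hdk)
      · exact Nat.div_le_div_right hkN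
    · rintro ⟨d, m⟩ hx
      simp only [Finset.mem_sigma, Finset.mem_Icc] at hx
      have : d * m / d = m := Nat.mul_div_cancel_left m (by omega)
      simp [this]
    · rintro ⟨k, d⟩ hx
      simp only [Finset.mem_sigma, Finset.mem_Icc, Nat.mem_divisors] at hx
      obtain ⟨⟨hk1, hkN⟩, hdk, hk0⟩ := hx
      simp [Nat.mul_div_cancel' hdk]
    · rintro ⟨d, m⟩ hx
      rfl
  have stepC : ∑ x ∈ (Icc 1 n).sigma (fun d => Icc 1 (n / d)),
          (1 / ((x.1 * x.2 : ℕ) : ℝ) * (∑ i ∈ Icc 1 (n / (x.1 * x.2)), (1 : ℝ) / i)) *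
            (iotaFun n x.1 * ((μ ((x.1 * x.2) / x.1) : ℤ) : ℝ))
      = ∑ d ∈ Icc 1 n, (if d ∣ n then (1:ℝ) else 0) := by
    rw [Finset.sum_sigma]
    refine Finset.sum_congr rfl fun d hd => ?_
    rw [Finset.mem_Icc] at hd
    have hd0 : (d:ℝ) ≠ 0 := by
      exact_mod_cast (by omega : d ≠ 0)
    by_cases hdn : d ∣ n
    · rw [if_pos hdn]
      have hNd : 1 ≤ n / d := (Nat.one_le_div_iff (by omega)).2 hd.2
      have hcongr : ∑ m ∈ Icc 1 (n / d),
            (1 / ((d * m : ℕ) : ℝ) * (∑ i ∈ Icc 1 (n / (d * m)), (1 : ℝ) / i)) *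
              (iotaFun n d * ((μ ((d * m) / d) : ℤ) : ℝ))
          = ∑ m ∈ Icc 1 (n / d), ((μ m : ℝ) / m) * (∑ j ∈ Icc 1 (n / d / m), (1:ℝ)/j) := by
        refine Finset.sum_congr rfl fun m hm => ?_
        rw [Finset.mem_Icc] at hm
        have hm0 : (m:ℝ) ≠ 0 := by
          exact_mod_cast (by omega : m ≠ 0)
        have e1 : d * m / d = m := Nat.mul_div_cancel_left m (by omega)
        have e2 : n / (d * m) = n / d / m := (Nat.div_div_eq_div_mul n d m).symm
        rw [e1, e2, iotaFun_apply, if_pos ⟨hdn, by omega⟩]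
        push_cast
        field_simp
      rw [hcongr, sum_mu_harmonic (n / d) hNd]
    · rw [if_neg hdn]
      refine Finset.sum_eq_zero fun m hm => ?_
      rw [iotaFun_apply, if_neg (by tauto)]
      ring
  rw [stepA, stepB, stepC, Finset.sum_boole]
  have hfilter : (Icc 1 n).filter (fun d => d ∣ n) = n.divisors := by
    ext d
    simp only [Finset.mem_filter, Finset.mem_Icc, Nat.mem_divisors]
    constructor
    · rintro ⟨⟨h1, h2⟩, h3⟩; exact ⟨h3, hn.ne'⟩
    · rintro ⟨h1, h2⟩
      exact ⟨⟨Nat.pos_of_dvd_of_pos h1 hn, Nat.le_of_dvd hn h1⟩, h1⟩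
  rw [hfilter]
end

section
/- For every positive integer n, the sum of divisors function satisfies σ(n) = Σ_{k=1}^{n} ⌊n/k⌋ · μ(k / gcd(n,k)) · (φ(k) / φ(k / gcd(n,k))). -/
open Finset ArithmeticFunction
open scoped ArithmeticFunction.Moebius ArithmeticFunction.zeta

private lemma sum_div_moebius (j : ℕ) (hj : j ≠ 0) :
    ∑ d ∈ j.divisors, μ d = if j = 1 then 1 else 0 := by
  have := congrArg (fun f : ArithmeticFunction ℤ => f j) moebius_mul_coe_zeta
  simp only [mul_apply, one_apply] at this
  rw [← this, Nat.sum_divisorsAntidiagonal (fun x y => μ x * (ζ : ArithmeticFunction ℤ) y)]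
  apply Finset.sum_congr rfl
  intro d hd
  rw [natCoe_apply, zeta_apply, if_neg, Nat.cast_one, mul_one]
  exact (Nat.div_ne_zero_iff_of_dvd (Nat.dvd_of_mem_divisors hd)).mpr
    ⟨hj, (Nat.pos_of_mem_divisors hd).ne'⟩

private lemma lemC (N : ℕ) (hN : 0 < N) :
    ∑ m ∈ Icc 1 N, (μ m : ℤ) * ((N / m : ℕ) : ℤ) = 1 := by
  have key : ∀ m : ℕ, ((N / m : ℕ) : ℤ) = ∑ j ∈ Ioc 0 N, if m ∣ j then (1 : ℤ) else 0 := by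
    intro m
    rw [Finset.sum_boole, ← Nat.Ioc_filter_dvd_card_eq_div]
  calc ∑ m ∈ Icc 1 N, (μ m : ℤ) * ((N / m : ℕ) : ℤ)
      = ∑ m ∈ Icc 1 N, ∑ j ∈ Ioc 0 N, (if m ∣ j then (μ m : ℤ) else 0) := by
        apply Finset.sum_congr rfl; intro m _
        rw [key, Finset.mul_sum]
        apply Finset.sum_congr rfl; intro j _
        rw [mul_ite, mul_one, mul_zero]
    _ = ∑ j ∈ Ioc 0 N, ∑ m ∈ Icc 1 N, (if m ∣ j then (μ m : ℤ) else 0) := Finset.sum_comm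
    _ = ∑ j ∈ Ioc 0 N, if j = 1 then 1 else 0 := by
        apply Finset.sum_congr rfl; intro j hj
        rw [mem_Ioc] at hj
        rw [← sum_div_moebius j hj.1.ne', ← Finset.sum_filter]
        congr 1
        ext m
        simp only [mem_filter, mem_Icc, Nat.mem_divisors]
        constructor
        · rintro ⟨_, hd⟩; exact ⟨hd, hj.1.ne'⟩
        · rintro ⟨hd, _⟩
          exact ⟨⟨Nat.pos_of_dvd_of_pos hd hj.1, le_trans (Nat.le_of_dvd hj.1 hd) hj.2⟩, hd⟩
    _ = 1 := by
        rw [Finset.sum_ite_eq' (Ioc 0 N) (1 : ℕ) (fun _ => (1:ℤ)), if_pos]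
        rw [mem_Ioc]; exact ⟨one_pos, hN⟩

/-- χ_m(e) = μ(e) if e coprime to m, else 0, as ℚ-valued arithmetic function. -/
private def chiAF (m : ℕ) : ArithmeticFunction ℚ :=
  ⟨fun e => if e.Coprime m then (μ e : ℚ) else 0, by simp⟩

private lemma chiAF_apply (m e : ℕ) :
    chiAF m e = if e.Coprime m then (μ e : ℚ) else 0 := rfl

private lemma chiAF_mult (m : ℕ) : (chiAF m).IsMultiplicative := by
  constructor
  · simp [chiAF_apply, Nat.coprime_one_left]
  · intro a b hab
    simp only [chiAF_apply]
    by_cases h : (a * b).Coprime m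
    · have h' := Nat.coprime_mul_iff_left.mp h
      rw [if_pos h, if_pos h'.1, if_pos h'.2, ← Int.cast_mul,
        ← isMultiplicative_moebius.map_mul_of_coprime hab]
    · rw [if_neg h]
      rcases (not_and_or.mp (fun h' => h (Nat.coprime_mul_iff_left.mpr h'))) with h1 | h1
      · rw [if_neg h1, zero_mul]
      · rw [if_neg h1, mul_zero]

/-- the ℚ-valued identity function as arithmetic function -/
private def idAF : ArithmeticFunction ℚ := ⟨fun e => (e : ℚ), by simp⟩

private lemma idAF_apply (e : ℕ) : idAF e = (e : ℚ) := rfl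

private lemma idAF_mult : idAF.IsMultiplicative :=
  ⟨by simp [idAF_apply], fun {a b} _ => by simp [idAF_apply]⟩

private def FmAF (m : ℕ) : ArithmeticFunction ℚ :=
  ⟨fun g => (Nat.totient (g * m) : ℚ) / (Nat.totient m : ℚ), by simp⟩

private lemma FmAF_apply (m g : ℕ) :
    FmAF m g = (Nat.totient (g * m) : ℚ) / (Nat.totient m : ℚ) := rfl

/-- key totient multiplicativity: for coprime a b,
    φ m * φ (a*b*m) = φ (a*m) * φ (b*m) -/
private lemma totient_rel_mult {a b : ℕ} (m : ℕ) (hm : 0 < m) (hab : Nat.Coprime a b) :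
    Nat.totient m * Nat.totient (a * b * m) = Nat.totient (a * m) * Nat.totient (b * m) := by
  have h1 := Nat.totient_gcd_mul_totient_mul (a * m) (b * m)
  have hg : Nat.gcd (a * m) (b * m) = m := by
    rw [Nat.gcd_mul_right, hab, one_mul]
  rw [hg] at h1
  have h2 := Nat.totient_gcd_mul_totient_mul (a * b * m) m
  have hg2 : Nat.gcd (a * b * m) m = m := Nat.gcd_eq_right ⟨a * b, by ring⟩
  rw [hg2] at h2
  -- h2 : φ m * φ (a*b*m*m) = φ (a*b*m) * φ m * m
  have e1 : a * m * (b * m) = a * b * m * m := by ring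
  rw [e1] at h1
  -- h1 : φ m * φ (a*b*m*m) = φ (a*m) * φ (b*m) * m
  have := h1.symm.trans h2
  -- φ(am)·φ(bm)·m = φ(abm)·φ m·m
  have := Nat.eq_of_mul_eq_mul_right hm this
  rw [mul_comm]; exact this.symm

private lemma FmAF_mult (m : ℕ) (hm : 0 < m) : (FmAF m).IsMultiplicative := by
  have hphi : (Nat.totient m : ℚ) ≠ 0 := Nat.cast_ne_zero.mpr (Nat.totient_pos.mpr hm).ne'
  constructor
  · rw [FmAF_apply, one_mul, div_self hphi]
  · intro a b hab
    rw [FmAF_apply, FmAF_apply, FmAF_apply, div_mul_div_comm, div_eq_div_iff hphi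
      (by positivity)]
    have h' : (Nat.totient m : ℚ) * (Nat.totient (a * b * m)) =
        (Nat.totient (a * m)) * (Nat.totient (b * m)) := by
      exact_mod_cast totient_rel_mult m hm hab
    linear_combination (Nat.totient m : ℚ) * h'

private def GmAF (m : ℕ) : ArithmeticFunction ℚ := chiAF m * idAF

private lemma GmAF_apply (m g : ℕ) :
    GmAF m g = ∑ d ∈ g.divisors, (if d.Coprime m then (μ d : ℚ) else 0) * ((g / d : ℕ) : ℚ) := by
  rw [GmAF, mul_apply, Nat.sum_divisorsAntidiagonal (fun x y => chiAF m x * idAF y)]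
  rfl

private lemma totient_pow_mul {p m : ℕ} (hp : p.Prime) (hpm : p ∣ m) (j : ℕ) :
    Nat.totient (p ^ j * m) = p ^ j * Nat.totient m := by
  induction j with
  | zero => simp
  | succ j ih =>
    have : p ^ (j + 1) * m = p * (p ^ j * m) := by ring
    rw [this, Nat.totient_mul_of_prime_of_dvd hp (Dvd.dvd.mul_left hpm _), ih]
    ring

private lemma FmGm (m : ℕ) (hm : 0 < m) : FmAF m = GmAF m := by
  have hphi : (Nat.totient m : ℚ) ≠ 0 := Nat.cast_ne_zero.mpr (Nat.totient_pos.mpr hm).ne'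
  have hGm : (GmAF m).IsMultiplicative := (chiAF_mult m).mul idAF_mult
  rw [ArithmeticFunction.IsMultiplicative.eq_iff_eq_on_prime_powers _ (FmAF_mult m hm) _ hGm]
  intro p i hp
  rcases i with _ | i
  · simp only [pow_zero]
    rw [(FmAF_mult m hm).map_one, hGm.map_one]
  rw [FmAF_apply]
  show _ = GmAF m (p ^ (i+1))
  rw [GmAF_apply, Nat.sum_divisors_prime_pow hp]
  have hpow : ∀ j, j ≤ i + 1 → ((p ^ (i+1) / p ^ j : ℕ) : ℚ) = (p : ℚ) ^ (i + 1 - j) := by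
    intro j hj
    rw [Nat.pow_div hj hp.pos]
    push_cast
    rfl
  by_cases hpm : p ∣ m
  · -- only j = 0 term survives
    have hsum : ∀ j ∈ range (i + 2), (if (p ^ j).Coprime m then (μ (p ^ j) : ℚ) else 0) *
        ((p ^ (i+1) / p ^ j : ℕ) : ℚ) = if j = 0 then (p : ℚ) ^ (i + 1) else 0 := by
      intro j hj
      rcases j with _ | j
      · simp [Nat.coprime_one_left]
      · rw [if_neg (fun hco => (hp.coprime_iff_not_dvd.mp
          ((Nat.coprime_pow_left_iff (Nat.succ_pos j) p m).mp hco)) hpm), zero_mul,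
          if_neg (Nat.succ_ne_zero j)]
    rw [Finset.sum_congr rfl hsum, Finset.sum_ite_eq' (range (i+2)) 0 (fun _ => (p:ℚ)^(i+1)),
      if_pos (by simp)]
    rw [totient_pow_mul hp hpm (i+1)]
    push_cast
    rw [mul_div_assoc, div_self hphi, mul_one]
  · -- coprime case
    have hco : (p ^ (i+1)).Coprime m := Nat.Coprime.pow_left _ ((Nat.Prime.coprime_iff_not_dvd hp).mpr hpm)
    rw [Nat.totient_mul hco, Nat.totient_prime_pow hp (Nat.succ_pos i)]
    have hsum : ∀ j ∈ range (i + 2), (if (p ^ j).Coprime m then (μ (p ^ j) : ℚ) else 0) *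
        ((p ^ (i+1) / p ^ j : ℕ) : ℚ) =
        (if j = 0 then (p : ℚ) ^ (i + 1) else 0) + (if j = 1 then -((p : ℚ) ^ i) else 0) := by
      intro j hj
      rcases j with _ | _ | j
      · simp [Nat.coprime_one_left]
      · rw [hpow 1 (by omega), pow_one, if_pos ((Nat.Prime.coprime_iff_not_dvd hp).mpr hpm),
          moebius_apply_prime hp]
        norm_num
      · rw [moebius_apply_prime_pow hp (by omega)]
        have h2 : j + 2 ≠ 1 := by omega
        have h0 : j + 2 ≠ 0 := by omega
        simp [h2, h0]
    rw [Finset.sum_congr rfl hsum, Finset.sum_add_distrib,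
      Finset.sum_ite_eq' (range (i+2)) 0 (fun _ => (p:ℚ)^(i+1)), if_pos (by simp),
      Finset.sum_ite_eq' (range (i+2)) 1 (fun _ => -((p:ℚ)^i)), if_pos (by simp [Nat.lt_succ])]
    rw [Nat.succ_sub_one]
    push_cast [Nat.cast_sub hp.one_lt.le]
    rw [mul_div_assoc, div_self hphi, mul_one]
    ring

private lemma stepA (n k : ℕ) (hn : 0 < n) (hk : 0 < k) :
    (μ (k / Nat.gcd n k) : ℚ) * ((Nat.totient k : ℚ) / (Nat.totient (k / Nat.gcd n k) : ℚ)) =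
      ((∑ d ∈ (Nat.gcd n k).divisors, (μ (k / d) : ℤ) * (d : ℤ) : ℤ) : ℚ) := by
  set g := Nat.gcd n k with hgdef
  set m := k / g with hmdef
  have hgk : g ∣ k := Nat.gcd_dvd_right n k
  have hg : 0 < g := Nat.gcd_pos_of_pos_left _ hn
  have hm : 0 < m := Nat.div_pos (Nat.le_of_dvd hk hgk) hg
  have hkgm : k = g * m := (Nat.mul_div_cancel' hgk).symm
  have hFG := congrArg (fun f : ArithmeticFunction ℚ => f g) (FmGm m hm)
  simp only [FmAF_apply, GmAF_apply] at hFG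
  have E1 : ((∑ d ∈ g.divisors, (μ (k / d) : ℤ) * (d : ℤ) : ℤ) : ℚ) =
      ∑ d ∈ g.divisors, (μ (k / (g / d)) : ℚ) * ((g / d : ℕ) : ℚ) := by
    rw [Nat.sum_div_divisors g (fun d => (μ (k / d) : ℚ) * ((d : ℕ) : ℚ))]
    push_cast
    rfl
  have E2 : ∀ d ∈ g.divisors, k / (g / d) = d * m := by
    intro d hd
    have hdg : d ∣ g := Nat.dvd_of_mem_divisors hd
    have hgd : 0 < g / d := Nat.div_pos (Nat.le_of_dvd hg hdg) (Nat.pos_of_mem_divisors hd)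
    have : k = (g / d) * (d * m) := by
      conv_lhs => rw [hkgm, ← Nat.div_mul_cancel hdg]
      rw [mul_assoc]
    rw [this, Nat.mul_div_cancel_left _ hgd]
  rw [E1, Finset.sum_congr rfl (fun d hd => by rw [E2 d hd])]
  have E3 : ∀ d ∈ g.divisors, (μ (d * m) : ℚ) * ((g / d : ℕ) : ℚ) =
      (μ m : ℚ) * ((if d.Coprime m then (μ d : ℚ) else 0) * ((g / d : ℕ) : ℚ)) := by
    intro d _
    by_cases hco : d.Coprime m
    · rw [if_pos hco, isMultiplicative_moebius.map_mul_of_coprime hco]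
      push_cast
      ring
    · rw [if_neg hco, moebius_eq_zero_of_not_squarefree]
      · simp
      · intro hsq
        exact hco (Nat.squarefree_mul_iff.mp hsq).1
  rw [Finset.sum_congr rfl E3, ← Finset.mul_sum, ← hFG, ← hkgm]

private lemma stepB (n : ℕ) (hn : 0 < n) :
    ∑ k ∈ Icc 1 n, ((n / k : ℕ) : ℤ) * ∑ d ∈ (Nat.gcd n k).divisors, (μ (k / d) : ℤ) * (d : ℤ) =
      ∑ d ∈ n.divisors, (d : ℤ) := by
  have hdiv : ∀ k, (Nat.gcd n k).divisors = n.divisors.filter (· ∣ k) := by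
    intro k; ext a
    simp only [Nat.mem_divisors, mem_filter, Nat.dvd_gcd_iff]
    constructor
    · rintro ⟨⟨h1, h2⟩, _⟩; exact ⟨⟨h1, hn.ne'⟩, h2⟩
    · rintro ⟨⟨h1, _⟩, h2⟩
      exact ⟨⟨h1, h2⟩, (Nat.pos_of_dvd_of_pos (Nat.gcd_dvd_left n k) hn).ne'⟩
  calc ∑ k ∈ Icc 1 n, ((n / k : ℕ) : ℤ) * ∑ d ∈ (Nat.gcd n k).divisors, (μ (k / d) : ℤ) * d
      = ∑ k ∈ Icc 1 n, ∑ d ∈ n.divisors,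
          (if d ∣ k then ((n / k : ℕ) : ℤ) * ((μ (k / d) : ℤ) * d) else 0) := by
        apply Finset.sum_congr rfl; intro k _
        rw [hdiv k, Finset.sum_filter, Finset.mul_sum]
        apply Finset.sum_congr rfl; intro d _
        rw [mul_ite, mul_zero]
    _ = ∑ d ∈ n.divisors, ∑ k ∈ Icc 1 n,
          (if d ∣ k then ((n / k : ℕ) : ℤ) * ((μ (k / d) : ℤ) * d) else 0) := Finset.sum_comm
    _ = ∑ d ∈ n.divisors, (d : ℤ) := by
        apply Finset.sum_congr rfl; intro d hd
        have hdn : d ∣ n := Nat.dvd_of_mem_divisors hd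
        have hd0 : 0 < d := Nat.pos_of_mem_divisors hd
        have hnd : 0 < n / d := Nat.div_pos (Nat.le_of_dvd hn hdn) hd0
        rw [← Finset.sum_filter]
        have hbij : ∑ k ∈ (Icc 1 n).filter (d ∣ ·), ((n / k : ℕ) : ℤ) * ((μ (k / d) : ℤ) * d) =
            ∑ c ∈ Icc 1 (n / d), ((n / d / c : ℕ) : ℤ) * ((μ c : ℤ) * d) := by
          apply Finset.sum_nbij' (fun k => k / d) (fun c => d * c)
          · intro k hk
            simp only [mem_filter, mem_Icc] at hk
            obtain ⟨⟨hk1, hk2⟩, hdk⟩ := hk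
            rw [mem_Icc]
            exact ⟨(Nat.one_le_div_iff hd0).mpr (Nat.le_of_dvd hk1 hdk),
              Nat.div_le_div_right hk2⟩
          · intro c hc
            rw [mem_Icc] at hc
            simp only [mem_filter, mem_Icc]
            refine ⟨⟨Nat.one_le_iff_ne_zero.mpr (Nat.mul_ne_zero hd0.ne' (by omega)), ?_⟩, Dvd.intro c rfl⟩
            calc d * c ≤ d * (n / d) := Nat.mul_le_mul_left d hc.2
              _ = n := Nat.mul_div_cancel' hdn
          · intro k hk
            simp only [mem_filter] at hk
            exact Nat.mul_div_cancel' hk.2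
          · intro c _
            exact Nat.mul_div_cancel_left c hd0
          · intro k hk
            simp only [mem_filter] at hk
            rw [Nat.div_div_eq_div_mul, Nat.mul_div_cancel' hk.2]
        rw [hbij]
        have : ∑ c ∈ Icc 1 (n / d), ((n / d / c : ℕ) : ℤ) * ((μ c : ℤ) * d) =
            (∑ c ∈ Icc 1 (n / d), (μ c : ℤ) * ((n / d / c : ℕ) : ℤ)) * d := by
          rw [Finset.sum_mul]
          apply Finset.sum_congr rfl; intro c _; ring
        rw [this, lemC (n / d) hnd, one_mul]

theorem sigma_formula (n : ℕ) (hn : 0 < n) :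
    ((∑ d ∈ n.divisors, d : ℕ) : ℚ) =
      ∑ k ∈ Icc 1 n,
        ((n / k : ℕ) : ℚ) * (ArithmeticFunction.moebius (k / Nat.gcd n k) : ℚ) *
          ((Nat.totient k : ℚ) / (Nat.totient (k / Nat.gcd n k) : ℚ)) := by
  have hterm : ∀ k ∈ Icc 1 n,
      ((n / k : ℕ) : ℚ) * (μ (k / Nat.gcd n k) : ℚ) *
        ((Nat.totient k : ℚ) / (Nat.totient (k / Nat.gcd n k) : ℚ)) =
      ((((n / k : ℕ) : ℤ) * ∑ d ∈ (Nat.gcd n k).divisors, (μ (k / d) : ℤ) * (d : ℤ) : ℤ) : ℚ) := by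
    intro k hk
    rw [mem_Icc] at hk
    rw [mul_assoc, stepA n k hn (by omega), Int.cast_mul, Int.cast_natCast]
  rw [Finset.sum_congr rfl hterm]
  rw [← Int.cast_sum, stepB n hn]
  push_cast
  rfl
end

section
/- For every positive integer n, the sum of divisors function satisfies σ(n) = Σ_{k=1}^{n} c_k(n) · ⌊n/k⌋, where c_k(n) is the Ramanujan sum. -/
open Finset Real Complex

lemma sum_exp_Icc (m n : ℕ) (hm : 0 < m) :
    ∑ j ∈ Icc 1 m, Complex.exp (2 * Real.pi * Complex.I * j * n / m) =
      if m ∣ n then (m : ℂ) else 0 := by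
  have hm0 : (m : ℂ) ≠ 0 := Nat.cast_ne_zero.mpr hm.ne'
  have h2pi : (2 * Real.pi * Complex.I : ℂ) ≠ 0 := by
    simp [Real.pi_ne_zero, Complex.I_ne_zero]
  set ζ : ℂ := Complex.exp (2 * Real.pi * Complex.I * n / m) with hζ
  have hpow : ∀ j : ℕ, Complex.exp (2 * Real.pi * Complex.I * j * n / m) = ζ ^ j := by
    intro j
    rw [hζ, ← Complex.exp_nat_mul]
    ring_nf
  have hζm : ζ ^ m = 1 := by
    rw [hζ, ← Complex.exp_nat_mul]
    have : (m : ℂ) * (2 * Real.pi * Complex.I * n / m) = (n : ℤ) * (2 * Real.pi * Complex.I) := by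
      push_cast; field_simp
    rw [this, Complex.exp_int_mul_two_pi_mul_I]
  have hIcc : ∑ j ∈ Icc 1 m, Complex.exp (2 * Real.pi * Complex.I * j * n / m)
      = ∑ j ∈ range m, ζ ^ j := by
    simp_rw [hpow]
    have hins : range (m + 1) = insert 0 (Icc 1 m) := by
      ext x; simp [Nat.lt_succ_iff]; omega
    have h0 : (0 : ℕ) ∉ Icc 1 m := by simp
    have := Finset.sum_range_succ (fun j => ζ ^ j) m
    rw [hins, Finset.sum_insert h0] at this
    simp only [hζm, pow_zero] at this
    linear_combination this
  rw [hIcc]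
  by_cases hdvd : m ∣ n
  · obtain ⟨c, rfl⟩ := hdvd
    have hζ1 : ζ = 1 := by
      rw [hζ]
      have : (2 * Real.pi * Complex.I * (m * c : ℕ) / m) = (c : ℤ) * (2 * Real.pi * Complex.I) := by
        push_cast; field_simp
      rw [this, Complex.exp_int_mul_two_pi_mul_I]
    rw [if_pos ⟨c, rfl⟩]
    simp [hζ1]
  · have hζ1 : ζ ≠ 1 := by
      intro h
      rw [hζ, Complex.exp_eq_one_iff] at h
      obtain ⟨k, hk⟩ := h
      apply hdvd
      have : (n : ℂ) = (k : ℂ) * m := by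
        field_simp at hk
        have := mul_left_cancel₀ h2pi (by linear_combination (2 * Real.pi * Complex.I) * hk : (2 * Real.pi * Complex.I) * (n:ℂ) = (2 * Real.pi * Complex.I) * ((k:ℂ) * m))
        exact this
      have hint : (n : ℤ) = k * m := by exact_mod_cast this
      exact Int.natCast_dvd_natCast.mp ⟨k, by linarith⟩
    rw [geom_sum_eq hζ1, hζm, if_neg hdvd]
    simp


lemma sum_ramanujan_divisors (m n : ℕ) (hm : 0 < m) :
    ∑ d ∈ m.divisors, ramanujanSum d n =
      ∑ j ∈ Icc 1 m, Complex.exp (2 * Real.pi * Complex.I * j * n / m) := by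
  unfold ramanujanSum
  rw [Finset.sum_sigma' m.divisors
    (fun d => (Icc 1 d).filter (fun k => Nat.gcd k d = 1))
    (fun d k => Complex.exp (2 * Real.pi * Complex.I * k * n / d))]
  refine Finset.sum_nbij' (fun x => x.2 * (m / x.1))
      (fun j => ⟨m / Nat.gcd j m, j / Nat.gcd j m⟩) ?_ ?_ ?_ ?_ ?_
  · rintro ⟨d, k⟩ hx
    simp only [mem_sigma, Nat.mem_divisors, mem_filter, mem_Icc] at hx
    obtain ⟨⟨hdm, _⟩, ⟨hk1, hkd⟩, hgcd⟩ := hx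
    have hd0 : 0 < d := Nat.pos_of_dvd_of_pos hdm hm
    simp only [mem_Icc]
    constructor
    · exact Nat.one_le_iff_ne_zero.mpr (Nat.mul_ne_zero (by omega)
        (Nat.ne_of_gt (Nat.div_pos (Nat.le_of_dvd hm hdm) hd0)))
    · calc k * (m / d) ≤ d * (m / d) := Nat.mul_le_mul_right _ hkd
        _ = m := Nat.mul_div_cancel' hdm
  · intro j hj
    simp only [mem_Icc] at hj
    have hj0 : 0 < j := hj.1
    set g := Nat.gcd j m with hg
    have hg0 : 0 < g := Nat.gcd_pos_of_pos_left m hj0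
    have hgm : g ∣ m := Nat.gcd_dvd_right j m
    have hgj : g ∣ j := Nat.gcd_dvd_left j m
    simp only [mem_sigma, Nat.mem_divisors, mem_filter, mem_Icc]
    refine ⟨⟨Nat.div_dvd_of_dvd hgm, hm.ne'⟩, ⟨?_, ?_⟩, ?_⟩
    · exact Nat.one_le_iff_ne_zero.mpr (Nat.ne_of_gt (Nat.div_pos (Nat.le_of_dvd hj0 hgj) hg0))
    · exact Nat.div_le_div_right hj.2
    · exact Nat.coprime_div_gcd_div_gcd hg0
  · rintro ⟨d, k⟩ hx
    simp only [mem_sigma, Nat.mem_divisors, mem_filter, mem_Icc] at hx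
    obtain ⟨⟨hdm, _⟩, ⟨hk1, hkd⟩, hgcd⟩ := hx
    have hd0 : 0 < d := Nat.pos_of_dvd_of_pos hdm hm
    have hmd0 : 0 < m / d := Nat.div_pos (Nat.le_of_dvd hm hdm) hd0
    have hgcd' : Nat.gcd (k * (m / d)) m = m / d := by
      rw [show Nat.gcd (k * (m / d)) m = Nat.gcd (k * (m / d)) (d * (m / d)) by
        rw [Nat.mul_div_cancel' hdm], Nat.gcd_mul_right, hgcd, one_mul]
    show (⟨m / Nat.gcd (k * (m / d)) m, k * (m / d) / Nat.gcd (k * (m / d)) m⟩ : Σ _ : ℕ, ℕ)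
        = ⟨d, k⟩
    rw [hgcd', Nat.div_div_self hdm hm.ne', Nat.mul_div_cancel _ hmd0]
  · intro j hj
    simp only [mem_Icc] at hj
    have hj0 : 0 < j := hj.1
    have hgm : Nat.gcd j m ∣ m := Nat.gcd_dvd_right j m
    have hgj : Nat.gcd j m ∣ j := Nat.gcd_dvd_left j m
    simp only []
    rw [Nat.div_div_self hgm hm.ne', Nat.div_mul_cancel hgj]
  · rintro ⟨d, k⟩ hx
    simp only [mem_sigma, Nat.mem_divisors, mem_filter, mem_Icc] at hx
    obtain ⟨⟨hdm, _⟩, ⟨hk1, hkd⟩, hgcd⟩ := hx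
    have hd0 : 0 < d := Nat.pos_of_dvd_of_pos hdm hm
    have hd0' : (d : ℂ) ≠ 0 := Nat.cast_ne_zero.mpr hd0.ne'
    have hm0' : (m : ℂ) ≠ 0 := Nat.cast_ne_zero.mpr hm.ne'
    have hmd0 : 0 < m / d := Nat.div_pos (Nat.le_of_dvd hm hdm) hd0
    have hmd0' : ((m / d : ℕ) : ℂ) ≠ 0 := Nat.cast_ne_zero.mpr hmd0.ne'
    have hcast : (m : ℂ) = ((m / d : ℕ) : ℂ) * d := by
      rw [← Nat.cast_mul, Nat.div_mul_cancel hdm]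
    congr 1
    rw [hcast]
    push_cast
    field_simp

theorem sigma_eq_sum_ramanujan (n : ℕ) (hn : 0 < n) :
    ((∑ d ∈ n.divisors, d : ℕ) : ℂ) =
      ∑ k ∈ Icc 1 n, ramanujanSum k n * ((n / k : ℕ) : ℂ) := by
  have hIoc : Icc 1 n = Ioc 0 n := rfl
  have step1 : ∀ k ∈ Icc 1 n,
      ramanujanSum k n * ((n / k : ℕ) : ℂ)
        = ∑ m ∈ (Icc 1 n).filter (fun m => k ∣ m), ramanujanSum k n := by
    intro k hk
    rw [Finset.sum_const, nsmul_eq_mul, mul_comm]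
    congr 1
    rw [hIoc, Nat.Ioc_filter_dvd_card_eq_div]
  rw [Finset.sum_congr rfl step1]
  simp_rw [Finset.sum_filter]
  rw [Finset.sum_comm]
  have step2 : ∀ m ∈ Icc 1 n,
      (∑ k ∈ Icc 1 n, if k ∣ m then ramanujanSum k n else 0)
        = if m ∣ n then (m : ℂ) else 0 := by
    intro m hm
    simp only [mem_Icc] at hm
    have hm0 : 0 < m := hm.1
    rw [← Finset.sum_filter]
    have hset : (Icc 1 n).filter (fun k => k ∣ m) = m.divisors := by
      ext k
      simp only [mem_filter, mem_Icc, Nat.mem_divisors]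
      constructor
      · rintro ⟨_, hkm⟩; exact ⟨hkm, hm0.ne'⟩
      · rintro ⟨hkm, _⟩
        exact ⟨⟨Nat.pos_of_dvd_of_pos hkm hm0, le_trans (Nat.le_of_dvd hm0 hkm) hm.2⟩, hkm⟩
    rw [hset, sum_ramanujan_divisors m n hm0, sum_exp_Icc m n hm0]
  rw [Finset.sum_congr rfl step2, ← Finset.sum_filter]
  have hdiv : (Icc 1 n).filter (fun m => m ∣ n) = n.divisors := by
    rw [Nat.divisors, ← Finset.Ico_add_one_right_eq_Icc]
  rw [hdiv]
  push_cast
  rfl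
end

section
/- For every positive integer n, the product of divisors function Π(n) = Π_{d | n} d satisfies log(Π(n)) = Σ_{k=1}^{n} μ(k / gcd(n,k)) · (φ(k) / φ(k / gcd(n,k))) · Σ_{l=1}^{⌊n/k⌋} log(k·l)/(k·l). -/
open Finset Real ArithmeticFunction
open scoped ArithmeticFunction.Moebius ArithmeticFunction.zeta

noncomputable def cfun (n : ℕ) : ArithmeticFunction ℝ :=
  ⟨fun k => (μ (k / Nat.gcd n k) : ℝ) *
      ((Nat.totient k : ℝ) / (Nat.totient (k / Nat.gcd n k) : ℝ)), by simp⟩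

lemma cfun_apply (n k : ℕ) : cfun n k = (μ (k / Nat.gcd n k) : ℝ) *
      ((Nat.totient k : ℝ) / (Nat.totient (k / Nat.gcd n k) : ℝ)) := rfl

lemma gcd_mul_coprime {n a b : ℕ} (hab : Nat.Coprime a b) :
    Nat.gcd n (a * b) = Nat.gcd n a * Nat.gcd n b := by
  apply Nat.dvd_antisymm
  · have h := (Nat.gcd_mul_gcd_eq_iff_dvd_mul_of_coprime (x := Nat.gcd n (a*b)) hab).2
      (Nat.gcd_dvd_right n (a*b))
    calc Nat.gcd n (a*b) = Nat.gcd (Nat.gcd n (a*b)) a * Nat.gcd (Nat.gcd n (a*b)) b := h.symm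
      _ ∣ Nat.gcd n a * Nat.gcd n b := by
          exact mul_dvd_mul (Nat.dvd_gcd (dvd_trans (Nat.gcd_dvd_left _ _) (Nat.gcd_dvd_left n _)) (Nat.gcd_dvd_right _ _))
            (Nat.dvd_gcd (dvd_trans (Nat.gcd_dvd_left _ _) (Nat.gcd_dvd_left n _)) (Nat.gcd_dvd_right _ _))
  · apply Nat.dvd_gcd
    · exact Nat.Coprime.mul_dvd_of_dvd_of_dvd
        (Nat.Coprime.coprime_dvd_left (Nat.gcd_dvd_right n a)
          (Nat.Coprime.coprime_dvd_right (Nat.gcd_dvd_right n b) hab))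
        (Nat.gcd_dvd_left n a) (Nat.gcd_dvd_left n b)
    · exact mul_dvd_mul (Nat.gcd_dvd_right n a) (Nat.gcd_dvd_right n b)

lemma cfun_isMult (n : ℕ) : (cfun n).IsMultiplicative := by
  constructor
  · simp [cfun_apply]
  · intro a b hab
    rcases eq_or_ne a 0 with rfl | ha
    · simp [cfun_apply]
    rcases eq_or_ne b 0 with rfl | hb
    · simp [cfun_apply]
    have hga : Nat.gcd n a ∣ a := Nat.gcd_dvd_right n a
    have hgb : Nat.gcd n b ∣ b := Nat.gcd_dvd_right n b
    have hg : Nat.gcd n (a * b) = Nat.gcd n a * Nat.gcd n b := gcd_mul_coprime hab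
    have hd : a * b / (Nat.gcd n a * Nat.gcd n b) = (a / Nat.gcd n a) * (b / Nat.gcd n b) :=
      (Nat.div_mul_div_comm hga hgb).symm
    have hcop : Nat.Coprime (a / Nat.gcd n a) (b / Nat.gcd n b) :=
      Nat.Coprime.coprime_dvd_left (Nat.div_dvd_of_dvd hga)
        (Nat.Coprime.coprime_dvd_right (Nat.div_dvd_of_dvd hgb) hab)
    simp only [cfun_apply, hg, hd]
    rw [isMultiplicative_moebius.map_mul_of_coprime hcop, Nat.totient_mul hab,
      Nat.totient_mul hcop]
    push_cast
    rw [mul_div_mul_comm]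
    ring

noncomputable def Gfun (n : ℕ) : ArithmeticFunction ℝ :=
  ⟨fun m => if m ∣ n ∧ m ≠ 0 then (m : ℝ) else 0, by simp⟩

lemma Gfun_apply (n m : ℕ) : Gfun n m = if m ∣ n ∧ m ≠ 0 then (m : ℝ) else 0 := rfl

lemma Gfun_isMult (n : ℕ) : (Gfun n).IsMultiplicative := by
  constructor
  · simp [Gfun_apply]
  · intro a b hab
    simp only [Gfun_apply]
    have : (a * b ∣ n ∧ a * b ≠ 0) ↔ ((a ∣ n ∧ a ≠ 0) ∧ (b ∣ n ∧ b ≠ 0)) := by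
      constructor
      · rintro ⟨hd, hne⟩
        exact ⟨⟨(dvd_mul_right a b).trans hd, fun h => hne (by simp [h])⟩,
          ⟨(dvd_mul_left b a).trans hd, fun h => hne (by simp [h])⟩⟩
      · rintro ⟨⟨h1, h2⟩, ⟨h3, h4⟩⟩
        exact ⟨hab.mul_dvd_of_dvd_of_dvd h1 h3, mul_ne_zero h2 h4⟩
    rw [if_congr this rfl rfl]
    by_cases h : (a ∣ n ∧ a ≠ 0) ∧ (b ∣ n ∧ b ≠ 0)
    · rw [if_pos h, if_pos h.1, if_pos h.2]; push_cast; ring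
    · rw [if_neg h]
      rcases not_and_or.1 h with h' | h'
      · rw [if_neg h', zero_mul]
      · rw [if_neg h', mul_zero]

lemma gcd_prime_pow {n p : ℕ} (hn : n ≠ 0) (hp : p.Prime) (j : ℕ) :
    Nat.gcd n (p ^ j) = p ^ min (n.factorization p) j := by
  set v := n.factorization p
  obtain ⟨i, hij, hi⟩ := (Nat.dvd_prime_pow hp).1 (Nat.gcd_dvd_right n (p ^ j))
  have hiv : i ≤ v := (hp.pow_dvd_iff_le_factorization hn).1 (hi ▸ Nat.gcd_dvd_left n (p ^ j))
  have h1 : p ^ min v j ∣ Nat.gcd n (p ^ j) :=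
    Nat.dvd_gcd ((hp.pow_dvd_iff_le_factorization hn).2 (min_le_left _ _))
      (pow_dvd_pow p (min_le_right _ _))
  have h2 : min v j ≤ i := (Nat.pow_dvd_pow_iff_le_right hp.one_lt).1 (hi ▸ h1)
  rw [hi, le_antisymm h2 (le_min hiv hij)]

lemma cfun_prime_pow {n p : ℕ} (hn : n ≠ 0) (hp : p.Prime) (j : ℕ) :
    cfun n (p ^ j) =
      if j ≤ n.factorization p then (Nat.totient (p ^ j) : ℝ)
      else if j = n.factorization p + 1 then -((p : ℝ) ^ n.factorization p)
      else 0 := by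
  set v := n.factorization p with hv
  have hq : p ^ j / Nat.gcd n (p ^ j) = p ^ (j - min v j) := by
    rw [gcd_prime_pow hn hp, Nat.pow_div (min_le_right _ _) hp.pos]
  rw [cfun_apply, hq]
  by_cases h1 : j ≤ v
  · rw [if_pos h1]
    have : j - min v j = 0 := by omega
    simp [this]
  · rw [if_neg h1]
    by_cases h2 : j = v + 1
    · rw [if_pos h2]
      have he : j - min v j = 1 := by omega
      rw [he, pow_one, moebius_apply_prime hp]
      subst h2
      rw [Nat.totient_prime_pow hp (Nat.succ_pos v), Nat.totient_prime hp]
      have hp1 : (1 : ℝ) ≤ (p : ℝ) := by exact_mod_cast hp.one_lt.le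
      have hpne : (p : ℝ) - 1 ≠ 0 := by
        have : (1:ℝ) < (p:ℝ) := by exact_mod_cast hp.one_lt
        linarith
      push_cast [Nat.cast_sub hp.one_lt.le]
      field_simp
    · rw [if_neg h2]
      have he : 2 ≤ j - min v j := by omega
      rw [moebius_apply_prime_pow hp (by omega), if_neg (by omega)]
      simp

lemma sum_totient_pp {p : ℕ} (hp : p.Prime) (a : ℕ) :
    ∑ j ∈ range (a + 1), (Nat.totient (p ^ j) : ℝ) = (p : ℝ) ^ a := by
  have h1 : ∑ d ∈ (p ^ a).divisors, Nat.totient d = p ^ a := Nat.sum_totient _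
  rw [Nat.sum_divisors_prime_pow hp] at h1
  exact_mod_cast congrArg (Nat.cast : ℕ → ℝ) h1

lemma conv_eq_Gfun {n : ℕ} (hn : 0 < n) :
    cfun n * ↑(ζ : ArithmeticFunction ℕ) = Gfun n := by
  rw [ArithmeticFunction.IsMultiplicative.eq_iff_eq_on_prime_powers _
    ((cfun_isMult n).mul isMultiplicative_zeta.natCast) _ (Gfun_isMult n)]
  intro p i hp
  rw [coe_mul_zeta_apply, Nat.sum_divisors_prime_pow hp, Gfun_apply]
  set v := n.factorization p with hv
  have hdvd : p ^ i ∣ n ↔ i ≤ v := hp.pow_dvd_iff_le_factorization hn.ne'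
  by_cases h : i ≤ v
  · rw [if_pos ⟨hdvd.2 h, pow_ne_zero i hp.pos.ne'⟩]
    have : ∀ j ∈ range (i + 1), cfun n (p ^ j) = (Nat.totient (p ^ j) : ℝ) := by
      intro j hj
      rw [cfun_prime_pow hn.ne' hp, if_pos (by simp at hj; omega)]
    rw [Finset.sum_congr rfl this, sum_totient_pp hp]
    push_cast; rfl
  · rw [if_neg (by rw [hdvd]; tauto)]
    have hsub : range (v + 2) ⊆ range (i + 1) := by
      apply Finset.range_subset_range.2; omega
    have hzero : ∀ j ∈ range (i + 1), j ∉ range (v + 2) → cfun n (p ^ j) = 0 := by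
      intro j _ hj
      simp only [Finset.mem_range, not_lt] at hj
      rw [cfun_prime_pow hn.ne' hp, if_neg (by omega), if_neg (by omega)]
    rw [← Finset.sum_subset hsub hzero, Finset.sum_range_succ]
    have : ∀ j ∈ range (v + 1), cfun n (p ^ j) = (Nat.totient (p ^ j) : ℝ) := by
      intro j hj
      rw [cfun_prime_pow hn.ne' hp, if_pos (by simp at hj; omega)]
    rw [Finset.sum_congr rfl this, sum_totient_pp hp,
      cfun_prime_pow hn.ne' hp, if_neg (by omega), if_pos rfl]
    ring

lemma sum_divisors_cfun {n : ℕ} (hn : 0 < n) (m : ℕ) :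
    ∑ k ∈ m.divisors, cfun n k = if m ∣ n ∧ m ≠ 0 then (m : ℝ) else 0 := by
  rw [← Gfun_apply, ← conv_eq_Gfun hn, coe_mul_zeta_apply]

theorem log_prod_divisors_formula (n : ℕ) (hn : 0 < n) :
    Real.log (∏ d ∈ n.divisors, (d : ℝ)) =
      ∑ k ∈ Icc 1 n,
        (μ (k / Nat.gcd n k) : ℝ) *
          ((Nat.totient k : ℝ) / (Nat.totient (k / Nat.gcd n k) : ℝ)) *
          ∑ l ∈ Icc 1 (n / k), Real.log ((k : ℝ) * l) / ((k : ℝ) * l) := by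
  have hR : ∀ k : ℕ, (μ (k / Nat.gcd n k) : ℝ) *
      ((Nat.totient k : ℝ) / (Nat.totient (k / Nat.gcd n k) : ℝ)) = cfun n k := fun k => rfl
  simp only [hR]
  rw [Real.log_prod (fun d hd => Nat.cast_ne_zero.2 (Nat.pos_of_mem_divisors hd).ne')]
  simp only [Finset.mul_sum]
  rw [← Finset.sum_sigma (Icc 1 n) (fun k => Icc 1 (n / k))
    (fun x => cfun n x.1 * (Real.log ((x.1 : ℝ) * x.2) / ((x.1 : ℝ) * x.2)))]
  have hswap : ∑ x ∈ (Icc 1 n).sigma (fun k => Icc 1 (n / k)),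
      cfun n x.1 * (Real.log ((x.1 : ℝ) * x.2) / ((x.1 : ℝ) * x.2)) =
      ∑ y ∈ (Icc 1 n).sigma (fun m => m.divisors),
      cfun n y.2 * (Real.log (y.1 : ℝ) / (y.1 : ℝ)) := by
    apply Finset.sum_bij' (i := fun x _ => (⟨x.1 * x.2, x.1⟩ : Σ _ : ℕ, ℕ))
      (j := fun y _ => (⟨y.2, y.1 / y.2⟩ : Σ _ : ℕ, ℕ))
    · rintro ⟨k, l⟩ hx
      simp only [Finset.mem_sigma, Finset.mem_Icc] at hx ⊢
      obtain ⟨⟨hk1, hkn⟩, hl1, hln⟩ := hx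
      have hkl : k * l ≤ n := by
        have := (Nat.le_div_iff_mul_le (by omega : 0 < k)).1 hln
        nlinarith
      refine ⟨⟨Nat.mul_pos (by omega) (by omega), hkl⟩,
        Nat.mem_divisors.2 ⟨Dvd.intro l rfl, (Nat.mul_pos (by omega) (by omega)).ne'⟩⟩
    · rintro ⟨m, k⟩ hy
      simp only [Finset.mem_sigma, Finset.mem_Icc, Nat.mem_divisors] at hy ⊢
      obtain ⟨⟨hm1, hmn⟩, hkm, hm0⟩ := hy
      have hk0 : 0 < k := Nat.pos_of_dvd_of_pos hkm (by omega)
      have hkm' : k ≤ m := Nat.le_of_dvd (by omega) hkm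
      refine ⟨⟨hk0, hkm'.trans hmn⟩, Nat.one_le_div_iff hk0 |>.2 hkm',
        Nat.div_le_div_right hmn⟩
    · rintro ⟨k, l⟩ hx
      simp only [Finset.mem_sigma, Finset.mem_Icc] at hx
      obtain ⟨⟨hk1, _⟩, _, _⟩ := hx
      simp [Nat.mul_div_cancel_left _ (by omega : 0 < k)]
    · rintro ⟨m, k⟩ hy
      simp only [Finset.mem_sigma, Finset.mem_Icc, Nat.mem_divisors] at hy
      obtain ⟨⟨hm1, hmn⟩, hkm, hm0⟩ := hy
      simp [Nat.mul_div_cancel' hkm]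
    · rintro ⟨k, l⟩ hx
      push_cast
      rfl
  rw [hswap, Finset.sum_sigma]
  have hstep : ∀ m ∈ Icc 1 n,
      ∑ k ∈ m.divisors, cfun n k * (Real.log (m : ℝ) / (m : ℝ)) =
      if m ∣ n then Real.log (m : ℝ) else 0 := by
    intro m hm
    simp only [Finset.mem_Icc] at hm
    rw [← Finset.sum_mul, sum_divisors_cfun hn m]
    by_cases h : m ∣ n
    · rw [if_pos ⟨h, by omega⟩, if_pos h]
      have : (m : ℝ) ≠ 0 := Nat.cast_ne_zero.2 (by omega)
      field_simp
    · rw [if_neg (by tauto), if_neg h, zero_mul]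
  rw [Finset.sum_congr rfl hstep, ← Finset.sum_filter]
  apply Finset.sum_congr _ (fun _ _ => rfl)
  ext d
  simp only [Nat.mem_divisors, Finset.mem_filter, Finset.mem_Icc]
  constructor
  · rintro ⟨hd, _⟩
    exact ⟨⟨Nat.pos_of_dvd_of_pos hd hn, Nat.le_of_dvd hn hd⟩, hd⟩
  · rintro ⟨_, hd⟩
    exact ⟨hd, hn.ne'⟩
end

section
/- For every positive integer n, Σ_{k=1}^{n} μ(k / gcd(n,k)) · (φ(k) / φ(k / gcd(n,k))) · Σ_{l=1}^{⌊n/k⌋} μ(k·l)/(k·l) equals 1 if n = 1 and equals 0 if n > 1. -/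
open Finset ArithmeticFunction
open scoped ArithmeticFunction.Moebius
open scoped ArithmeticFunction.zeta

namespace KroneckerAux

/-- The Ramanujan-sum-like value `μ(k/gcd(n,k)) φ(k)/φ(k/gcd(n,k))`. -/
noncomputable def fval (n k : ℕ) : ℚ :=
  (μ (k / Nat.gcd n k) : ℚ) *
    ((Nat.totient k : ℚ) / (Nat.totient (k / Nat.gcd n k) : ℚ))

lemma fval_zero (n : ℕ) : fval n 0 = 0 := by
  simp [fval, Nat.zero_div]

noncomputable def F (n : ℕ) : ArithmeticFunction ℚ := ⟨fval n, fval_zero n⟩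

lemma F_apply (n k : ℕ) : F n k = fval n k := rfl

lemma F_mult (n : ℕ) : (F n).IsMultiplicative := by
  rw [ArithmeticFunction.IsMultiplicative.iff_ne_zero]
  constructor
  · show fval n 1 = 1
    simp [fval, Nat.gcd_one_right]
  · intro a b ha hb hab
    show fval n (a * b) = fval n a * fval n b
    have hg : Nat.gcd n (a * b) = Nat.gcd n a * Nat.gcd n b := hab.gcd_mul n
    have hga : Nat.gcd n a ∣ a := Nat.gcd_dvd_right n a
    have hgb : Nat.gcd n b ∣ b := Nat.gcd_dvd_right n b
    have hd : a * b / (Nat.gcd n a * Nat.gcd n b)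
        = (a / Nat.gcd n a) * (b / Nat.gcd n b) := (Nat.div_mul_div_comm hga hgb).symm
    have hcop : Nat.Coprime (a / Nat.gcd n a) (b / Nat.gcd n b) :=
      Nat.Coprime.coprime_dvd_left (Nat.div_dvd_of_dvd hga)
        (Nat.Coprime.coprime_dvd_right (Nat.div_dvd_of_dvd hgb) hab)
    rw [fval, fval, fval, hg, hd,
      Nat.totient_mul hab, Nat.totient_mul hcop,
      isMultiplicative_moebius.map_mul_of_coprime hcop]
    push_cast
    rw [← div_mul_div_comm]
    ring

lemma gcd_prime_pow (n : ℕ) (hn : 0 < n) {p : ℕ} (hp : p.Prime) (j : ℕ) :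
    Nat.gcd n (p ^ j) = p ^ min (n.factorization p) j := by
  obtain ⟨i, hij, hi⟩ := (Nat.dvd_prime_pow hp).mp (Nat.gcd_dvd_right n (p ^ j))
  have hin : p ^ i ∣ n := hi ▸ Nat.gcd_dvd_left n (p ^ j)
  have hib : i ≤ n.factorization p :=
    (Nat.Prime.pow_dvd_iff_le_factorization hp hn.ne').mp hin
  refine Nat.dvd_antisymm (hi ▸ pow_dvd_pow p (le_min hib hij)) (Nat.dvd_gcd ?_ ?_)
  · exact (Nat.Prime.pow_dvd_iff_le_factorization hp hn.ne').mpr (min_le_left _ _)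
  · exact pow_dvd_pow p (min_le_right _ _)

lemma fval_prime_pow (n : ℕ) (hn : 0 < n) {p : ℕ} (hp : p.Prime) (j : ℕ) :
    fval n (p ^ j) =
      if j ≤ n.factorization p then (Nat.totient (p ^ j) : ℚ)
      else if j = n.factorization p + 1
        then -((p : ℚ) ^ n.factorization p) else 0 := by
  set b := n.factorization p with hb
  rw [fval, gcd_prime_pow n hn hp j, ← hb]
  rcases le_or_gt j b with h | h
  · rw [min_eq_right h, Nat.div_self (pow_pos hp.pos j), if_pos h]
    simp
  · have hmin : min b j = b := min_eq_left h.le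
    rw [hmin, Nat.pow_div h.le hp.pos, if_neg (not_le.mpr h)]
    rcases eq_or_ne j (b + 1) with hj | hj
    · rw [if_pos hj, hj]
      have h1 : b + 1 - b = 1 := by omega
      rw [h1, pow_one, moebius_apply_prime hp, Nat.totient_prime_pow_succ hp,
        Nat.totient_prime hp]
      have hp1 : ((p - 1 : ℕ) : ℚ) ≠ 0 := by
        have h2 : 2 ≤ p := hp.two_le
        exact_mod_cast Nat.sub_ne_zero_of_lt (by omega)
      rw [Nat.cast_mul, Nat.cast_pow, mul_div_assoc, div_self hp1]
      push_cast
      ring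
    · rw [if_neg hj]
      have h2 : j - b ≠ 0 := by omega
      rw [moebius_apply_prime_pow hp h2, if_neg (by omega : ¬ j - b = 1)]
      simp

lemma sum_totient_pow {p : ℕ} (hp : p.Prime) (c : ℕ) :
    ∑ j ∈ range (c + 1), (Nat.totient (p ^ j) : ℚ) = (p : ℚ) ^ c := by
  rw [← Nat.cast_sum, ← Nat.sum_divisors_prime_pow hp, Nat.sum_totient, Nat.cast_pow]

lemma sum_fval_prime_pow (n : ℕ) (hn : 0 < n) {p : ℕ} (hp : p.Prime) (a : ℕ) :
    ∑ k ∈ (p ^ a).divisors, fval n k = if p ^ a ∣ n then ((p : ℚ) ^ a) else 0 := by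
  set b := n.factorization p with hb
  rw [Nat.sum_divisors_prime_pow hp]
  have hdvd : p ^ a ∣ n ↔ a ≤ b := Nat.Prime.pow_dvd_iff_le_factorization hp hn.ne'
  rcases le_or_gt a b with h | h
  · rw [if_pos (hdvd.mpr h)]
    calc ∑ j ∈ range (a + 1), fval n (p ^ j)
        = ∑ j ∈ range (a + 1), (Nat.totient (p ^ j) : ℚ) := by
          refine Finset.sum_congr rfl fun j hj => ?_
          rw [fval_prime_pow n hn hp j, if_pos (by
            have := Finset.mem_range.mp hj; omega)]
      _ = (p : ℚ) ^ a := sum_totient_pow hp a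
  · rw [if_neg (by rw [hdvd]; omega)]
    rw [Finset.range_eq_Ico,
      ← Finset.sum_Ico_consecutive _ (Nat.zero_le (b + 1)) (by omega : b + 1 ≤ a + 1)]
    have h1 : ∑ j ∈ Ico 0 (b + 1), fval n (p ^ j) = (p : ℚ) ^ b := by
      rw [← Finset.range_eq_Ico]
      calc ∑ j ∈ range (b + 1), fval n (p ^ j)
          = ∑ j ∈ range (b + 1), (Nat.totient (p ^ j) : ℚ) := by
            refine Finset.sum_congr rfl fun j hj => ?_
            rw [fval_prime_pow n hn hp j, if_pos (by
              have := Finset.mem_range.mp hj; omega)]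
        _ = (p : ℚ) ^ b := sum_totient_pow hp b
    have h2 : ∑ j ∈ Ico (b + 1) (a + 1), fval n (p ^ j) = -((p : ℚ) ^ b) := by
      have hc : ∀ j ∈ Ico (b + 1) (a + 1),
          fval n (p ^ j) = if j = b + 1 then -((p : ℚ) ^ b) else 0 := by
        intro j hj
        rw [Finset.mem_Ico] at hj
        rw [fval_prime_pow n hn hp j, if_neg (by omega)]
      rw [Finset.sum_congr rfl hc,
        Finset.sum_ite_eq' (Ico (b + 1) (a + 1)) (b + 1) (fun _ => -((p : ℚ) ^ b)),
        if_pos (Finset.mem_Ico.mpr ⟨le_refl _, by omega⟩)]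
    rw [h1, h2]
    ring

noncomputable def G (n : ℕ) : ArithmeticFunction ℚ :=
  ⟨fun m => if m ∣ n ∧ m ≠ 0 then (m : ℚ) else 0, by simp⟩

lemma G_apply (n m : ℕ) : G n m = if m ∣ n ∧ m ≠ 0 then (m : ℚ) else 0 := rfl

lemma G_mult (n : ℕ) : (G n).IsMultiplicative := by
  rw [ArithmeticFunction.IsMultiplicative.iff_ne_zero]
  constructor
  · rw [G_apply]
    simp
  · intro a b ha hb hab
    rw [G_apply, G_apply, G_apply]
    by_cases h : a * b ∣ n
    · have hda : a ∣ n := (dvd_mul_right a b).trans h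
      have hdb : b ∣ n := (dvd_mul_left b a).trans h
      rw [if_pos ⟨h, mul_ne_zero ha hb⟩, if_pos ⟨hda, ha⟩, if_pos ⟨hdb, hb⟩, Nat.cast_mul]
    · rw [if_neg (fun hc => h hc.1)]
      have hor : ¬ (a ∣ n) ∨ ¬ (b ∣ n) := by
        by_contra hc
        push_neg at hc
        exact h (Nat.Coprime.mul_dvd_of_dvd_of_dvd hab hc.1 hc.2)
      rcases hor with h' | h'
      · rw [if_neg (show ¬(a ∣ n ∧ a ≠ 0) from fun hc => h' hc.1), zero_mul]
      · rw [if_neg (show ¬(b ∣ n ∧ b ≠ 0) from fun hc => h' hc.1), mul_zero]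

lemma S_eq_G (n : ℕ) (hn : 0 < n) : F n * ζ = G n := by
  rw [ArithmeticFunction.IsMultiplicative.eq_iff_eq_on_prime_powers _
    ((F_mult n).mul isMultiplicative_zeta.natCast) _ (G_mult n)]
  intro p i hp
  rw [coe_mul_zeta_apply, G_apply]
  have hne : (p : ℕ) ^ i ≠ 0 := pow_ne_zero i hp.pos.ne'
  have hF : ∑ k ∈ (p ^ i).divisors, F n k = ∑ k ∈ (p ^ i).divisors, fval n k := rfl
  rw [hF, sum_fval_prime_pow n hn hp i]
  by_cases h : p ^ i ∣ n
  · rw [if_pos h, if_pos ⟨h, hne⟩, Nat.cast_pow]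
  · rw [if_neg h, if_neg (fun hc => h hc.1)]

lemma sum_fval_divisors (n : ℕ) (hn : 0 < n) (m : ℕ) :
    ∑ k ∈ m.divisors, fval n k = if m ∣ n ∧ m ≠ 0 then (m : ℚ) else 0 := by
  have h1 : (F n * ζ) m = ∑ k ∈ m.divisors, F n k := coe_mul_zeta_apply
  calc ∑ k ∈ m.divisors, fval n k = ∑ k ∈ m.divisors, F n k := rfl
    _ = (F n * ζ) m := h1.symm
    _ = G n m := by rw [S_eq_G n hn]
    _ = _ := rfl

end KroneckerAux

theorem kronecker_formula (n : ℕ) (hn : 0 < n) :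
    ∑ k ∈ Icc 1 n,
        (μ (k / Nat.gcd n k) : ℚ) *
          ((Nat.totient k : ℚ) / (Nat.totient (k / Nat.gcd n k) : ℚ)) *
          ∑ l ∈ Icc 1 (n / k), (μ (k * l) : ℚ) / ((k : ℚ) * l) =
      if n = 1 then 1 else 0 := by
  classical
  calc ∑ k ∈ Icc 1 n,
        (μ (k / Nat.gcd n k) : ℚ) *
          ((Nat.totient k : ℚ) / (Nat.totient (k / Nat.gcd n k) : ℚ)) *
          ∑ l ∈ Icc 1 (n / k), (μ (k * l) : ℚ) / ((k : ℚ) * l)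
      = ∑ k ∈ Icc 1 n, ∑ l ∈ Icc 1 (n / k),
          KroneckerAux.fval n k * ((μ (k * l) : ℚ) / (((k * l : ℕ) : ℚ))) := by
        refine Finset.sum_congr rfl fun k _ => ?_
        rw [Finset.mul_sum]
        refine Finset.sum_congr rfl fun l _ => ?_
        rw [KroneckerAux.fval, Nat.cast_mul]
    _ = ∑ m ∈ Icc 1 n, ∑ k ∈ m.divisors,
          KroneckerAux.fval n k * ((μ m : ℚ) / ((m : ℕ) : ℚ)) := by
        rw [Finset.sum_sigma', Finset.sum_sigma']
        refine Finset.sum_nbij' (fun x => ⟨x.1 * x.2, x.1⟩) (fun y => ⟨y.2, y.1 / y.2⟩)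
          ?_ ?_ ?_ ?_ ?_
        · rintro ⟨k, l⟩ hx
          rw [Finset.mem_sigma, Finset.mem_Icc, Finset.mem_Icc] at hx
          dsimp only at hx ⊢
          obtain ⟨⟨hk1, hkn⟩, hl1, hln⟩ := hx
          rw [Finset.mem_sigma, Finset.mem_Icc, Nat.mem_divisors]
          have hkl : k * l ≤ n := by
            have := (Nat.le_div_iff_mul_le (by omega : 0 < k)).mp hln
            nlinarith
          refine ⟨⟨by nlinarith, hkl⟩, dvd_mul_right k l, by positivity⟩
        · rintro ⟨m, k⟩ hy
          rw [Finset.mem_sigma, Finset.mem_Icc, Nat.mem_divisors] at hy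
          dsimp only at hy ⊢
          obtain ⟨⟨hm1, hmn⟩, hkm, hm0⟩ := hy
          have hk1 : 0 < k := Nat.pos_of_dvd_of_pos hkm (by omega)
          rw [Finset.mem_sigma, Finset.mem_Icc, Finset.mem_Icc]
          refine ⟨⟨hk1, le_trans (Nat.le_of_dvd (by omega) hkm) hmn⟩, ?_, ?_⟩
          · rw [Nat.one_le_div_iff hk1]
            exact Nat.le_of_dvd (by omega) hkm
          · exact Nat.div_le_div_right hmn
        · rintro ⟨k, l⟩ hx
          rw [Finset.mem_sigma, Finset.mem_Icc, Finset.mem_Icc] at hx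
          dsimp only at hx ⊢
          have hk : 0 < k := hx.1.1
          simp [Nat.mul_div_cancel_left l hk]
        · rintro ⟨m, k⟩ hy
          rw [Finset.mem_sigma, Finset.mem_Icc, Nat.mem_divisors] at hy
          dsimp only at hy ⊢
          simp [Nat.mul_div_cancel' hy.2.1]
        · rintro ⟨k, l⟩ _
          rfl
    _ = ∑ m ∈ Icc 1 n, ((μ m : ℚ) / ((m : ℕ) : ℚ)) *
          (if m ∣ n ∧ m ≠ 0 then (m : ℚ) else 0) := by
        refine Finset.sum_congr rfl fun m _ => ?_
        rw [← Finset.sum_mul, KroneckerAux.sum_fval_divisors n hn m]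
        ring
    _ = ∑ m ∈ Icc 1 n, (if m ∣ n then (μ m : ℚ) else 0) := by
        refine Finset.sum_congr rfl fun m hm => ?_
        have hm1 : 1 ≤ m := (Finset.mem_Icc.mp hm).1
        have hm0 : ((m : ℕ) : ℚ) ≠ 0 := by
          exact_mod_cast (by omega : (m : ℕ) ≠ 0)
        by_cases h : m ∣ n
        · rw [if_pos ⟨h, by omega⟩, if_pos h, div_mul_cancel₀ _ hm0]
        · rw [if_neg (fun hc => h hc.1), if_neg h, mul_zero]
    _ = ∑ m ∈ n.divisors, (μ m : ℚ) := by
        rw [← Finset.sum_filter]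
        congr 1
    _ = if n = 1 then 1 else 0 := by
        have h := congrArg (fun f : ArithmeticFunction ℚ => f n)
          (coe_moebius_mul_coe_zeta (R := ℚ))
        simp only [coe_mul_zeta_apply, one_apply] at h
        rw [← h]
        exact Finset.sum_congr rfl fun m _ => (intCoe_apply).symm
end
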